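/- arXiv:math/0507326 — 8 statements merged into one kernel-verified Lean document; each statement's English description precedes it below -/
import Mathlib

section
/- Let K be a field and consider the E-algebra homomorphism π : E[[z_1,...,z_k]] → E[[z_1]] defined by π(z_1) = z_1 and π(z_i) = γ_i z_1 for 2 ≤ i ≤ k, where E is a field containing a subfield L and γ_2,...,γ_k ∈ E are algebraically independent over L. Then the kernel of π intersected with L[[z_1,...,z_k]] is the zero ideal. -/
open Finset in
/-- The `E`-algebra homomorphism `π : E[[z_0,...,z_k]] → E[[z_0]]` with `π(z_0) = z_0` and
`π(z_i) = γ_i z_0` (encoded coefficientwise: the coefficient of `z_0^n` in `π(f)` is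
`∑_{|d| = n} (coeff d f) ∏ γ_i^{d i}`, with `γ_0 = 1`).  If the `γ_i` (`i ≠ 0`) are
algebraically independent over a subfield `L ⊆ E`, then no nonzero power series all of whose
coefficients lie in `L` is in the kernel of `π`. -/
theorem stmt1 (E : Type*) [Field E] (L : Subfield E) (k : ℕ)
    (γ : Fin (k + 1) → E) (hγ0 : γ 0 = 1)
    (hγ : AlgebraicIndependent L (fun i : {i : Fin (k + 1) // i ≠ 0} => γ i.1))
    (f : MvPowerSeries (Fin (k + 1)) E)
    (hfL : ∀ d : Fin (k + 1) →₀ ℕ, MvPowerSeries.coeff d f ∈ L)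
    (hker : (PowerSeries.mk fun n => ∑ v ∈ Nat.antidiagonalTuple (k + 1) n,
        MvPowerSeries.coeff (Finsupp.equivFunOnFinite.symm v) f * ∏ i, γ i ^ v i :
      PowerSeries E) = 0) :
    f = 0 := by
  ext d
  rw [map_zero]
  set n : ℕ := ∑ i, d i with hn
  -- coefficient n of the kernel power series
  have h : ∑ v ∈ Nat.antidiagonalTuple (k + 1) n,
      MvPowerSeries.coeff (Finsupp.equivFunOnFinite.symm v) f * ∏ i, γ i ^ v i = 0 := by
    have := congrArg (PowerSeries.coeff n) hker
    simpa using this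
  set r : (Fin (k + 1) → ℕ) → ({i : Fin (k + 1) // i ≠ 0} →₀ ℕ) :=
    fun v => Finsupp.equivFunOnFinite.symm (fun i => v i.1) with hr
  set P : MvPolynomial {i : Fin (k + 1) // i ≠ 0} L :=
    ∑ v ∈ Nat.antidiagonalTuple (k + 1) n,
      MvPolynomial.monomial (r v) (⟨MvPowerSeries.coeff (Finsupp.equivFunOnFinite.symm v) f,
        hfL _⟩ : L) with hP
  -- products agree
  have hprod : ∀ v : Fin (k + 1) → ℕ,
      (∏ i : {i : Fin (k + 1) // i ≠ 0}, γ i.1 ^ v i.1) = ∏ i, γ i ^ v i := by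
    intro v
    rw [← Finset.prod_subtype (Finset.univ.erase 0) (by simp) (fun i => γ i ^ v i)]
    rw [← Finset.mul_prod_erase Finset.univ (fun i => γ i ^ v i) (Finset.mem_univ 0),
      hγ0, one_pow, one_mul]
  have haeval : MvPolynomial.aeval (fun i : {i : Fin (k + 1) // i ≠ 0} => γ i.1) P = 0 := by
    rw [hP, map_sum, ← h]
    refine Finset.sum_congr rfl fun v _ => ?_
    rw [MvPolynomial.aeval_monomial, Finsupp.prod_fintype _ _ (fun i => pow_zero _)]
    simp only [hr, Finsupp.coe_equivFunOnFinite_symm]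
    rw [hprod v]
    rfl
  have hP0 : P = 0 := hγ (by rw [haeval, map_zero])
  -- extract the coefficient at r d
  have hco := congrArg (MvPolynomial.coeff (r (d : Fin (k + 1) → ℕ))) hP0
  rw [hP, MvPolynomial.coeff_zero] at hco
  simp only [MvPolynomial.coeff_sum, MvPolynomial.coeff_monomial] at hco
  rw [Finset.sum_eq_single (d : Fin (k + 1) → ℕ)] at hco
  · rw [if_pos rfl] at hco
    have : (Finsupp.equivFunOnFinite.symm (d : Fin (k + 1) → ℕ)) = d := by
      simp
    rw [this] at hco
    exact Subtype.ext_iff.1 hco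
  · intro v hv hne
    rw [if_neg]
    intro hre
    apply hne
    -- v and d agree off 0 and have the same sum n, hence agree at 0
    have hoff : ∀ i : Fin (k + 1), i ≠ 0 → v i = d i := by
      intro i hi
      have := DFunLike.congr_fun hre ⟨i, hi⟩
      simpa [hr] using this
    have hsv : ∑ i, v i = n := (Finset.Nat.mem_antidiagonalTuple).1 hv
    have h0 : v 0 = d 0 := by
      have h1 : v 0 + ∑ i ∈ Finset.univ.erase 0, v i = n := by
        rw [Finset.add_sum_erase _ _ (Finset.mem_univ 0), hsv]
      have h2 : d 0 + ∑ i ∈ Finset.univ.erase 0, d i = n := by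
        rw [Finset.add_sum_erase _ _ (Finset.mem_univ 0)]
      have h3 : ∑ i ∈ Finset.univ.erase 0, v i = ∑ i ∈ Finset.univ.erase 0, d i :=
        Finset.sum_congr rfl fun i hi => hoff i (Finset.mem_erase.1 hi).1
      omega
    funext i
    by_cases hi : i = 0
    · rw [hi]; exact h0
    · exact hoff i hi
  · intro hd
    exfalso
    exact hd ((Finset.Nat.mem_antidiagonalTuple).2 rfl)
end

section
/- Let E be a field, let L ⊆ E be a subfield, and let γ_2,...,γ_k ∈ E be algebraically independent over L. Then the ideal q = (z_2 − γ_2 z_1, ..., z_k − γ_k z_1) of E[[z_1,...,z_k]] satisfies q ∩ L[[z_1,...,z_k]] = (0). -/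
open MvPowerSeries Finset

/-- The "evaluation at `z_i := w_i t`" functional in degree `n`. -/
noncomputable def Phi (E : Type*) [CommRing E] (k : ℕ) (w : Fin (k + 1) → E) (n : ℕ)
    (h : MvPowerSeries (Fin (k + 1)) E) : E :=
  ∑ d ∈ Finset.Nat.antidiagonalTuple (k + 1) n,
    MvPowerSeries.coeff (R := E) (Finsupp.equivFunOnFinite.symm d) h * ∏ i, w i ^ d i

lemma Phi_sub (E : Type*) [CommRing E] (k : ℕ) (w : Fin (k + 1) → E) (n : ℕ)
    (a b : MvPowerSeries (Fin (k + 1)) E) :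
    Phi E k w n (a - b) = Phi E k w n a - Phi E k w n b := by
  simp [Phi, sub_mul, Finset.sum_sub_distrib]

lemma Phi_sum (E : Type*) [CommRing E] (k : ℕ) (w : Fin (k + 1) → E) (n : ℕ)
    {ι : Type*} (s : Finset ι) (h : ι → MvPowerSeries (Fin (k + 1)) E) :
    Phi E k w n (∑ i ∈ s, h i) = ∑ i ∈ s, Phi E k w n (h i) := by
  unfold Phi
  simp_rw [map_sum, Finset.sum_mul]
  exact Finset.sum_comm

lemma Phi_C_mul (E : Type*) [CommRing E] (k : ℕ) (w : Fin (k + 1) → E) (n : ℕ)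
    (a : E) (g : MvPowerSeries (Fin (k + 1)) E) :
    Phi E k w n (MvPowerSeries.C (σ := Fin (k + 1)) (R := E) a * g) = a * Phi E k w n g := by
  simp [Phi, MvPowerSeries.coeff_C_mul, Finset.mul_sum, mul_assoc]

lemma Phi_mul_X_zero (E : Type*) [CommRing E] (k : ℕ) (w : Fin (k + 1) → E)
    (g : MvPowerSeries (Fin (k + 1)) E) (j : Fin (k + 1)) :
    Phi E k w 0 (g * MvPowerSeries.X j) = 0 := by
  rw [Phi, Finset.Nat.antidiagonalTuple_zero_right, Finset.sum_singleton]
  have : (Finsupp.equivFunOnFinite.symm (0 : Fin (k + 1) → ℕ)) = 0 := by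
    ext i; simp
  rw [this, MvPowerSeries.coeff_zero_mul_X, zero_mul]

lemma Phi_mul_X (E : Type*) [CommRing E] (k : ℕ) (w : Fin (k + 1) → E) (n : ℕ)
    (g : MvPowerSeries (Fin (k + 1)) E) (j : Fin (k + 1)) :
    Phi E k w (n + 1) (g * MvPowerSeries.X j) = w j * Phi E k w n g := by
  classical
  obtain ⟨e, he⟩ : ∃ e : Fin (k + 1) → ℕ, e = Pi.single j 1 := ⟨_, rfl⟩
  rw [Phi, Phi, Finset.mul_sum]
  have hco : ∀ d : Fin (k + 1) → ℕ,
      MvPowerSeries.coeff (R := E) (Finsupp.equivFunOnFinite.symm d) (g * MvPowerSeries.X j) =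
        if Finsupp.single j 1 ≤ Finsupp.equivFunOnFinite.symm d then
          MvPowerSeries.coeff (R := E) (Finsupp.equivFunOnFinite.symm d - Finsupp.single j 1) g
        else 0 := by
    intro d
    rw [MvPowerSeries.X, MvPowerSeries.coeff_mul_monomial]
    split <;> simp
  refine Finset.sum_bij_ne_zero (fun d _ _ => d - e) ?_ ?_ ?_ ?_
  · intro d hd hne
    rw [Finset.Nat.mem_antidiagonalTuple] at hd ⊢
    rw [hco] at hne
    have hj : 1 ≤ d j := by
      by_contra h
      rw [if_neg, zero_mul] at hne
      · exact hne rfl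
      · rw [Finsupp.single_le_iff]; simpa using h
    have hsum2 : ∑ i ∈ Finset.univ.erase j, (d - e) i = ∑ i ∈ Finset.univ.erase j, d i :=
      Finset.sum_congr rfl fun i hi => by
        have : i ≠ j := (Finset.mem_erase.mp hi).1
        simp [he, Pi.single_eq_of_ne this]
    have e1 : (d - e) j + ∑ i ∈ Finset.univ.erase j, (d - e) i = ∑ i, (d - e) i :=
      Finset.add_sum_erase _ _ (Finset.mem_univ j)
    have e2 : d j + ∑ i ∈ Finset.univ.erase j, d i = ∑ i, d i :=
      Finset.add_sum_erase _ _ (Finset.mem_univ j)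
    have hjj : (d - e) j = d j - 1 := by simp [he, Pi.single_eq_same]
    show (∑ i, (d - e) i) = n
    omega
  · intro d₁ h₁ hne₁ d₂ h₂ hne₂ heq
    have hj : ∀ d : Fin (k + 1) → ℕ, d ∈ Finset.Nat.antidiagonalTuple (k + 1) (n + 1) →
        MvPowerSeries.coeff (R := E) (Finsupp.equivFunOnFinite.symm d) (g * MvPowerSeries.X j) *
          (∏ i, w i ^ d i) ≠ 0 → 1 ≤ d j := by
      intro d _ hne
      rw [hco] at hne
      by_contra h
      rw [if_neg, zero_mul] at hne
      · exact hne rfl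
      · rw [Finsupp.single_le_iff]; simpa using h
    have hj₁ := hj d₁ h₁ hne₁
    have hj₂ := hj d₂ h₂ hne₂
    funext i
    have := congrFun heq i
    by_cases hij : i = j
    · subst hij; simp only [he, Pi.sub_apply, Pi.single_eq_same] at this; omega
    · simpa [he, Pi.single_eq_of_ne hij] using this
  · intro b hb hbne
    refine ⟨b + e, ?_, ?_, ?_⟩
    · rw [Finset.Nat.mem_antidiagonalTuple] at hb ⊢
      simp [he, Finset.sum_add_distrib, hb, Finset.sum_pi_single']
    · rw [hco]
      have hle : Finsupp.single j 1 ≤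
          Finsupp.equivFunOnFinite.symm (b + e) := by
        rw [Finsupp.single_le_iff]
        simp [he, Pi.single_eq_same]
      rw [if_pos hle]
      have h1 : Finsupp.equivFunOnFinite.symm (b + e) - Finsupp.single j 1
          = Finsupp.equivFunOnFinite.symm b := by
        ext i
        by_cases hij : i = j
        · subst hij; simp [he, Finsupp.tsub_apply, Pi.single_eq_same]
        · simp [he, Finsupp.tsub_apply, Pi.single_eq_of_ne hij,
            Finsupp.single_eq_of_ne hij]
      rw [h1]
      have h2 : ∏ i, w i ^ (b + e) i = w j * ∏ i, w i ^ b i := by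
        rw [← Finset.mul_prod_erase _ _ (Finset.mem_univ j),
          ← Finset.mul_prod_erase _ (fun i => w i ^ b i) (Finset.mem_univ j)]
        have : ∀ i ∈ Finset.univ.erase j, w i ^ (b + e) i = w i ^ b i := by
          intro i hi
          have : i ≠ j := (Finset.mem_erase.mp hi).1
          simp [he, Pi.single_eq_of_ne this]
        rw [Finset.prod_congr rfl this]
        simp [he, Pi.single_eq_same, pow_succ]
        ring
      rw [h2]
      intro hcon
      apply hbne
      rw [← hcon]; ring
    · funext i
      by_cases hij : i = j
      · subst hij; simp [he, Pi.single_eq_same]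
      · simp [he, Pi.single_eq_of_ne hij]
  · intro d hd hne
    rw [hco] at hne ⊢
    have hj : 1 ≤ d j := by
      by_contra h
      rw [if_neg, zero_mul] at hne
      · exact hne rfl
      · rw [Finsupp.single_le_iff]; simpa using h
    have hle : Finsupp.single j 1 ≤ Finsupp.equivFunOnFinite.symm d := by
      rw [Finsupp.single_le_iff]; simpa using hj
    rw [if_pos hle]
    have h1 : Finsupp.equivFunOnFinite.symm d - Finsupp.single j 1
        = Finsupp.equivFunOnFinite.symm (d - e) := by
      ext i
      by_cases hij : i = j
      · subst hij; simp [he, Finsupp.tsub_apply, Pi.single_eq_same]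
      · simp [he, Finsupp.tsub_apply, Pi.single_eq_of_ne hij,
          Finsupp.single_eq_of_ne hij]
    rw [h1]
    have h2 : ∏ i, w i ^ d i = w j * ∏ i, w i ^ (d - e) i := by
      rw [← Finset.mul_prod_erase _ (fun i => w i ^ d i) (Finset.mem_univ j),
        ← Finset.mul_prod_erase _ (fun i => w i ^ (d - e) i)
          (Finset.mem_univ j)]
      have : ∀ i ∈ Finset.univ.erase j, w i ^ (d - e) i = w i ^ d i := by
        intro i hi
        have : i ≠ j := (Finset.mem_erase.mp hi).1
        simp [he, Pi.single_eq_of_ne this]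
      rw [Finset.prod_congr rfl this]
      have hjj : (d - e) j = d j - 1 := by simp [he, Pi.single_eq_same]
      rw [hjj]
      have hwj : w j ^ d j = w j * w j ^ (d j - 1) := by
        conv_lhs => rw [show d j = (d j - 1) + 1 by omega]
        rw [pow_succ]; ring
      rw [hwj]; ring
    rw [h2]; ring

/-- If `γ_i` (for `i ≠ 0`) are elements of a field `E` algebraically independent over a
subfield `L`, then the ideal `(z_i - γ_i z_0 : i ≠ 0)` of `E[[z_0,...,z_k]]` meets
`L[[z_0,...,z_k]]` trivially. -/
theorem stmt2 (E : Type*) [Field E] (L : Subfield E) (k : ℕ)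
    (γ : Fin (k + 1) → E)
    (hγ : AlgebraicIndependent L (fun i : {i : Fin (k + 1) // i ≠ 0} => γ i.1))
    (f : MvPowerSeries (Fin (k + 1)) E)
    (hfL : ∀ d : Fin (k + 1) →₀ ℕ, MvPowerSeries.coeff (σ := Fin (k + 1)) (R := E) d f ∈ L)
    (hfq : f ∈ Ideal.span (Set.range (fun i : {i : Fin (k + 1) // i ≠ 0} =>
      (MvPowerSeries.X i.1 - MvPowerSeries.C (σ := Fin (k + 1)) (R := E) (γ i.1) * MvPowerSeries.X 0 :
        MvPowerSeries (Fin (k + 1)) E)))) :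
    f = 0 := by
  classical
  set w : Fin (k + 1) → E := fun i => if i = 0 then 1 else γ i with hw
  -- f is a combination of the generators
  obtain ⟨c, hc⟩ := (Submodule.mem_span_range_iff_exists_fun _).mp hfq
  -- Phi vanishes on f
  have hPhi : ∀ n : ℕ, Phi E k w n f = 0 := by
    intro n
    rw [← hc, Phi_sum]
    refine Finset.sum_eq_zero fun j _ => ?_
    have hexp : c j • (MvPowerSeries.X j.1 -
        MvPowerSeries.C (σ := Fin (k + 1)) (R := E) (γ j.1) * MvPowerSeries.X 0) =
        c j * MvPowerSeries.X j.1 -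
          MvPowerSeries.C (σ := Fin (k + 1)) (R := E) (γ j.1) * (c j * MvPowerSeries.X 0) := by
      rw [smul_eq_mul]; ring
    rw [hexp, Phi_sub, Phi_C_mul]
    cases n with
    | zero => rw [Phi_mul_X_zero, Phi_mul_X_zero, mul_zero, sub_zero]
    | succ m =>
        rw [Phi_mul_X, Phi_mul_X]
        have h0 : w 0 = 1 := by simp [hw]
        have hj : w j.1 = γ j.1 := by simp [hw, j.2]
        rw [h0, hj, one_mul]
        ring
  -- conclude each coefficient of f vanishes
  ext d₀
  rw [map_zero]
  set n : ℕ := ∑ i, d₀ i with hn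
  set m : (Fin (k + 1) → ℕ) → ({i : Fin (k + 1) // i ≠ 0} →₀ ℕ) :=
    fun d => Finsupp.equivFunOnFinite.symm (fun i => d i.1) with hm
  -- injectivity of d ↦ m d on the antidiagonal
  have hminj : ∀ d₁ ∈ Finset.Nat.antidiagonalTuple (k + 1) n,
      ∀ d₂ ∈ Finset.Nat.antidiagonalTuple (k + 1) n, m d₁ = m d₂ → d₁ = d₂ := by
    intro d₁ h₁ d₂ h₂ heq
    rw [Finset.Nat.mem_antidiagonalTuple] at h₁ h₂
    have hne : ∀ i : Fin (k + 1), i ≠ 0 → d₁ i = d₂ i := by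
      intro i hi
      have := congrArg (fun g => g ⟨i, hi⟩) heq
      simpa [hm] using this
    have hsum : ∑ i ∈ Finset.univ.erase 0, d₁ i = ∑ i ∈ Finset.univ.erase 0, d₂ i :=
      Finset.sum_congr rfl fun i hi => hne i (Finset.mem_erase.mp hi).1
    have e₁ : d₁ 0 + ∑ i ∈ Finset.univ.erase 0, d₁ i = n := by
      rw [Finset.add_sum_erase _ _ (Finset.mem_univ 0)]; exact h₁
    have e₂ : d₂ 0 + ∑ i ∈ Finset.univ.erase 0, d₂ i = n := by
      rw [Finset.add_sum_erase _ _ (Finset.mem_univ 0)]; exact h₂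
    funext i
    by_cases hi : i = 0
    · subst hi; omega
    · exact hne i hi
  -- the polynomial witnessing the relation
  set P : MvPolynomial {i : Fin (k + 1) // i ≠ 0} L :=
    ∑ d ∈ Finset.Nat.antidiagonalTuple (k + 1) n,
      MvPolynomial.monomial (m d)
        (⟨MvPowerSeries.coeff (R := E) (Finsupp.equivFunOnFinite.symm d) f,
          hfL _⟩ : L) with hP
  have heval : MvPolynomial.aeval (fun i : {i : Fin (k + 1) // i ≠ 0} => γ i.1) P
      = Phi E k w n f := by
    rw [hP, map_sum, Phi]
    refine Finset.sum_congr rfl fun d hd => ?_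
    rw [MvPolynomial.aeval_monomial]
    have hprod : ((m d).prod fun i e => γ i.1 ^ e) = ∏ i, w i ^ d i := by
      rw [Finsupp.prod_pow]
      have h1 : ∏ i, w i ^ d i = w 0 ^ d 0 * ∏ i ∈ Finset.univ.erase 0, w i ^ d i :=
        (Finset.mul_prod_erase _ _ (Finset.mem_univ (0 : Fin (k + 1)))).symm
      have h2 : ∏ i ∈ Finset.univ.erase 0, w i ^ d i
          = ∏ i : {i : Fin (k + 1) // i ≠ 0}, w i.1 ^ d i.1 := by
        rw [← Finset.prod_subtype (Finset.univ.erase 0)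
          (fun i => by simp [Finset.mem_erase]) (fun i => w i ^ d i)]
      have h3 : ∀ i : {i : Fin (k + 1) // i ≠ 0}, w i.1 ^ d i.1 = γ i.1 ^ (m d) i := by
        intro i
        simp [hw, hm, i.2]
      rw [h1, h2]
      simp only [hw, if_pos rfl, one_pow, one_mul]
      refine Finset.prod_congr rfl fun i _ => ?_
      rw [← h3 i]
    rw [hprod]
    rfl
  have hP0 : P = 0 := by
    apply hγ
    rw [map_zero, heval]
    exact hPhi n
  -- extract the coefficient at m ⇑d₀
  have hd₀mem : (⇑d₀ : Fin (k + 1) → ℕ) ∈ Finset.Nat.antidiagonalTuple (k + 1) n := by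
    rw [Finset.Nat.mem_antidiagonalTuple]
  have hcoeff : MvPolynomial.coeff (m ⇑d₀) P
      = (⟨MvPowerSeries.coeff (R := E) (Finsupp.equivFunOnFinite.symm ⇑d₀) f, hfL _⟩ : L) := by
    rw [hP, MvPolynomial.coeff_sum]
    rw [Finset.sum_eq_single_of_mem (⇑d₀) hd₀mem]
    · rw [MvPolynomial.coeff_monomial, if_pos rfl]
    · intro d hd hne
      rw [MvPolynomial.coeff_monomial, if_neg]
      intro heq
      exact hne (hminj d hd (⇑d₀) hd₀mem heq)
  rw [hP0, MvPolynomial.coeff_zero] at hcoeff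
  have := congrArg (Subtype.val) hcoeff.symm
  simpa [Finsupp.equivFunOnFinite_symm_coe] using this
end

section
/- Let F be a countable field and let D_0 be a countable Noetherian local subring of F[[z,t]] whose completion is F[[z,t]]. Then there exists a power series γ ∈ zF[[z]] such that (t − γ)F[[z,t]] ∩ D_0 = (0); that is, the height-one prime (t − γ) lies in the generic formal fiber of D_0. -/
set_option maxHeartbeats 1000000
set_option synthInstance.maxHeartbeats 1000000

namespace Stmt6Aux

open PowerSeries Finset

variable {F : Type*} [Field F]

/-- Tail sums: `T γ f n = ∑_{j} γ^j · f_{n+j}` (convergent since `γ` has zero constant term). -/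
noncomputable def T (γ : PowerSeries F) (f : PowerSeries (PowerSeries F)) (n : ℕ) :
    PowerSeries F :=
  PowerSeries.mk fun k =>
    ∑ j ∈ Finset.range (k + 1), coeff k (γ ^ j * coeff (n + j) f)

lemma hvan {γ : PowerSeries F} (hγ : constantCoeff γ = 0) (a : PowerSeries F) {k j : ℕ}
    (h : k < j) : coeff k (γ ^ j * a) = 0 := by
  have hd : (X : PowerSeries F) ^ j ∣ γ ^ j * a :=
    dvd_mul_of_dvd_left (pow_dvd_pow_of_dvd (X_dvd_iff.2 hγ) j) a
  exact X_pow_dvd_iff.1 hd k h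

lemma T_rec {γ : PowerSeries F} (hγ : constantCoeff γ = 0)
    (f : PowerSeries (PowerSeries F)) (n : ℕ) :
    T γ f n = coeff n f + γ * T γ f (n + 1) := by
  refine PowerSeries.ext fun k => ?_
  rw [map_add, T, coeff_mk]
  have hmul : coeff k (γ * T γ f (n + 1)) =
      ∑ j ∈ Finset.range (k + 1),
        coeff k (γ ^ (j + 1) * coeff (n + (j + 1)) f) := by
    rw [coeff_mul]
    have h1 : ∀ p ∈ antidiagonal k, coeff p.1 γ * coeff p.2 (T γ f (n + 1)) =
        ∑ j ∈ Finset.range (k + 1),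
          coeff p.1 γ * coeff p.2 (γ ^ j * coeff (n + 1 + j) f) := by
      intro p hp
      rw [T, coeff_mk, Finset.mul_sum]
      apply Finset.sum_subset
      · intro j hj
        simp only [Finset.mem_range] at hj ⊢
        have := Finset.HasAntidiagonal.mem_antidiagonal.1 hp
        omega
      · intro j _ hj
        simp only [Finset.mem_range, not_lt] at hj
        rw [hvan hγ _ (by omega), mul_zero]
    rw [Finset.sum_congr rfl h1, Finset.sum_comm]
    refine Finset.sum_congr rfl fun j _ => ?_
    rw [← coeff_mul k γ (γ ^ j * coeff (n + 1 + j) f)]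
    have hidx : n + 1 + j = n + (j + 1) := by omega
    rw [← mul_assoc, ← pow_succ', hidx]
  rw [hmul, Finset.sum_range_succ']
  have h0 : coeff k (γ ^ 0 * coeff (n + 0) f) =
      coeff k (coeff n f) := by norm_num
  rw [h0, Finset.sum_range_succ
    (fun j => coeff k (γ ^ (j + 1) * coeff (n + (j + 1)) f)) k]
  rw [hvan hγ _ (by omega : k < k + 1)]
  ring

/-- The remainder (evaluation of `f` at `X := γ`). -/
noncomputable def Ev (γ : PowerSeries F) (f : PowerSeries (PowerSeries F)) : PowerSeries F :=
  T γ f 0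

/-- Division with remainder by `X - C γ`. -/
lemma div_rem {γ : PowerSeries F} (hγ : constantCoeff γ = 0)
    (f : PowerSeries (PowerSeries F)) :
    f = (X - C γ) * (PowerSeries.mk fun n => T γ f (n + 1))
      + C (Ev γ f) := by
  refine PowerSeries.ext fun n => ?_
  rw [map_add, sub_mul, map_sub, coeff_C_mul, coeff_mk, PowerSeries.coeff_C]
  cases n with
  | zero =>
    rw [coeff_zero_X_mul, if_pos rfl]
    have h := T_rec hγ f 0
    rw [Ev]
    linear_combination -h
  | succ n =>
    rw [coeff_succ_X_mul, coeff_mk, if_neg (Nat.succ_ne_zero n)]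
    have h := T_rec hγ f (n + 1)
    linear_combination -h

/-- Uniqueness of the quotient/remainder. -/
lemma unique {γ : PowerSeries F} (hγ : constantCoeff γ = 0)
    {q : PowerSeries (PowerSeries F)} {r : PowerSeries F}
    (h : (X - C γ) * q + C r = 0) : q = 0 ∧ r = 0 := by
  have hrec : ∀ n, coeff n q = γ * coeff (n + 1) q := by
    intro n
    have h2 := congrArg (coeff (n + 1)) h
    rw [map_add, sub_mul, map_sub, coeff_succ_X_mul, coeff_C_mul, PowerSeries.coeff_C,
      if_neg (Nat.succ_ne_zero n), map_zero] at h2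
    linear_combination h2
  have hpow : ∀ n m, coeff n q = γ ^ m * coeff (n + m) q := by
    intro n m
    induction m with
    | zero => simp
    | succ m ih =>
      rw [ih, hrec (n + m), ← mul_assoc, ← pow_succ]
      have hnm : n + (m + 1) = n + m + 1 := by omega
      rw [hnm]
  have hq : q = 0 := by
    refine PowerSeries.ext fun n => PowerSeries.ext fun k => ?_
    rw [hpow n (k + 1), hvan hγ _ (by omega : k < k + 1)]
    simp
  refine ⟨hq, ?_⟩
  rw [hq, mul_zero, zero_add] at h
  have := congrArg (constantCoeff) h
  rwa [constantCoeff_C, map_zero] at this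

lemma Ev_unique {γ : PowerSeries F} (hγ : constantCoeff γ = 0)
    {f q : PowerSeries (PowerSeries F)} {r : PowerSeries F}
    (h : f = (X - C γ) * q + C r) : Ev γ f = r := by
  have h2 := div_rem hγ f
  have h3 : (X - C γ) * ((PowerSeries.mk fun n => T γ f (n + 1)) - q)
      + C (Ev γ f - r) = 0 := by
    rw [map_sub]
    linear_combination h - h2
  have h4 := (unique hγ h3).2
  linear_combination h4

lemma mem_iff {γ : PowerSeries F} (hγ : constantCoeff γ = 0)
    (f : PowerSeries (PowerSeries F)) :
    f ∈ Ideal.span {X - C γ} ↔ Ev γ f = 0 := by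
  constructor
  · intro hf
    obtain ⟨g, hg⟩ := Ideal.mem_span_singleton.1 hf
    refine Ev_unique hγ (q := g) (r := 0) ?_
    rw [map_zero, add_zero, hg]
  · intro hf
    have h := div_rem hγ f
    rw [hf, map_zero, add_zero] at h
    exact Ideal.mem_span_singleton.2 ⟨_, h⟩

lemma Ev_mul {γ : PowerSeries F} (hγ : constantCoeff γ = 0)
    (f g : PowerSeries (PowerSeries F)) : Ev γ (f * g) = Ev γ f * Ev γ g := by
  refine Ev_unique hγ (q :=
    (PowerSeries.mk fun n => T γ f (n + 1)) *
        ((X - C γ) * (PowerSeries.mk fun n => T γ g (n + 1))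
          + C (Ev γ g))
      + C (Ev γ f) * (PowerSeries.mk fun n => T γ g (n + 1))) ?_
  rw [map_mul]
  conv_lhs => rw [div_rem hγ f, div_rem hγ g]
  ring

lemma Ev_X_sub_C {γ : PowerSeries F} (hγ : constantCoeff γ = 0) (γ' : PowerSeries F) :
    Ev γ (X - C γ') = γ - γ' := by
  refine Ev_unique hγ (q := 1) ?_
  rw [map_sub]
  ring

/-- The ideal `(X, C z)`. -/
noncomputable def Jid (F : Type*) [Field F] : Ideal (PowerSeries (PowerSeries F)) :=
  Ideal.span {X, C (X : PowerSeries F)}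

lemma coeff_mem_pow {n : ℕ} {f : PowerSeries (PowerSeries F)} (hf : f ∈ Jid F ^ n)
    {k m : ℕ} (h : k + m < n) : coeff k (coeff m f) = 0 := by
  induction n generalizing f k m with
  | zero => omega
  | succ n ih =>
    rw [pow_succ] at hf
    refine Submodule.mul_induction_on hf (fun x hx y hy => ?_) (fun u v hu hv => ?_)
    · obtain ⟨a, b, hab⟩ := Ideal.mem_span_pair.1 hy
      have hx_a : x * a ∈ Jid F ^ n := Ideal.mul_mem_right a _ hx
      have hx_b : x * b ∈ Jid F ^ n := Ideal.mul_mem_right b _ hx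
      have hxy : x * y = (x * a) * X
          + C (X : PowerSeries F) * (x * b) := by
        rw [← hab]; ring
      have e1 : coeff k (coeff m ((x * a) * X)) = 0 := by
        cases m with
        | zero => rw [coeff_zero_mul_X, map_zero]
        | succ m => rw [coeff_succ_mul_X]; exact ih hx_a (by omega)
      have e2 : coeff k ((X : PowerSeries F) * coeff m (x * b)) = 0 := by
        cases k with
        | zero => rw [coeff_zero_X_mul]
        | succ k => rw [coeff_succ_X_mul]; exact ih hx_b (by omega)
      rw [hxy, map_add, map_add, coeff_C_mul, e1, e2, add_zero]
    · rw [map_add, map_add, hu, hv, add_zero]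

lemma X_sub_C_mem_Jid {γ : PowerSeries F} (hγ : constantCoeff γ = 0) :
    X - C γ ∈ Jid F := by
  obtain ⟨g, hg⟩ := X_dvd_iff.2 hγ
  have hX : (X : PowerSeries (PowerSeries F)) ∈ Jid F :=
    Ideal.subset_span (Set.mem_insert _ _)
  have hCz : C (X : PowerSeries F) ∈ Jid F :=
    Ideal.subset_span (Set.mem_insert_of_mem _ rfl)
  have hCγ : C γ ∈ Jid F := by
    rw [hg, map_mul]
    exact Ideal.mul_mem_right _ _ hCz
  exact sub_mem hX hCγ

lemma mem_Jpow {d : PowerSeries (PowerSeries F)} (s : Finset (PowerSeries F))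
    (hs : ∀ γ ∈ s, constantCoeff γ = 0 ∧ (X - C γ) ∣ d) :
    d ∈ Jid F ^ s.card := by
  induction s using Finset.cons_induction generalizing d with
  | empty => simpa using Submodule.mem_top
  | cons γ s hγs ih =>
    obtain ⟨hγ0, q, hq⟩ := hs γ (Finset.mem_cons_self γ s)
    have hq' : ∀ γ' ∈ s, constantCoeff γ' = 0 ∧ (X - C γ') ∣ q := by
      intro γ' hγ'
      obtain ⟨h0', hd'⟩ := hs γ' (Finset.mem_cons_of_mem hγ')
      refine ⟨h0', ?_⟩
      have h1 : Ev γ' d = 0 := (mem_iff h0' d).1 (Ideal.mem_span_singleton.2 hd')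
      rw [hq, Ev_mul h0', Ev_X_sub_C h0'] at h1
      have hne : γ' - γ ≠ 0 := sub_ne_zero.2 fun he => hγs (he ▸ hγ')
      have h2 : Ev γ' q = 0 := by
        rcases mul_eq_zero.1 h1 with h | h
        · exact absurd h hne
        · exact h
      exact Ideal.mem_span_singleton.1 ((mem_iff h0' q).2 h2)
    have hqmem := ih hq'
    rw [Finset.card_cons, pow_succ, hq, mul_comm (X - C γ) q]
    exact Ideal.mul_mem_mul hqmem (X_sub_C_mem_Jid hγ0)

/-- For `d ≠ 0`, only finitely many admissible `γ` have `X - C γ` dividing `d`. -/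
lemma Zfin (d : PowerSeries (PowerSeries F)) :
    {γ : PowerSeries F | constantCoeff γ = 0 ∧ d ≠ 0 ∧
      (X - C γ) ∣ d}.Finite := by
  by_cases hd : d = 0
  · simp [hd]
  rw [← Set.not_infinite]
  intro hinf
  apply hd
  refine PowerSeries.ext fun m => PowerSeries.ext fun k => ?_
  obtain ⟨s, hs_sub, hs_card⟩ := hinf.exists_subset_card_eq (k + m + 1)
  have hmem := mem_Jpow s (fun γ hγ =>
    ⟨(hs_sub (Finset.mem_coe.2 hγ)).1, (hs_sub (Finset.mem_coe.2 hγ)).2.2⟩)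
  rw [hs_card] at hmem
  rw [coeff_mem_pow hmem (by omega)]
  simp

/-- The set of power series with zero constant term is uncountable. -/
lemma uncount : ¬ ({γ : PowerSeries F | constantCoeff γ = 0}.Countable) := by
  intro hc
  classical
  set g : Set ℕ → PowerSeries F :=
    fun s => X * PowerSeries.mk (fun n => if n ∈ s then (1 : F) else 0) with hg_def
  have hginj : Function.Injective g := by
    intro s t hst
    ext n
    have h2 := congrArg (coeff (n + 1)) hst
    rw [hg_def] at h2
    simp only [coeff_succ_X_mul, coeff_mk] at h2
    by_cases hns : n ∈ s <;> by_cases hnt : n ∈ t <;>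
      simp [hns, hnt] at h2 ⊢ <;> tauto
  have hrange : Set.range g ⊆ {γ : PowerSeries F | constantCoeff γ = 0} := by
    rintro _ ⟨s, rfl⟩
    simp [hg_def, g]
  have hcr : (Set.range g).Countable := hc.mono hrange
  have : Countable (Set ℕ) := by
    have := hcr.to_subtype
    exact Countable.of_equiv _ (Equiv.ofInjective g hginj).symm
  obtain ⟨f, hf⟩ := Countable.exists_injective_nat (Set ℕ)
  exact Function.cantor_injective f hf

end Stmt6Aux

set_option synthInstance.maxHeartbeats 1000000 in
set_option maxHeartbeats 1000000 in
open IsLocalRing in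
/-- Let `F` be a countable field and `D₀` a countable Noetherian local subring of
`F[[z,t]] = (F[[z]])[[t]]` whose completion is `F[[z,t]]` (encoded: `D₀` is dense in the
maximal-ideal-adic topology and carries the subspace filtration).  Then there is
`γ ∈ zF[[z]]` with `(t - γ)F[[z,t]] ∩ D₀ = (0)`. -/
theorem stmt6 (F : Type*) [Field F] [Countable F]
    (D0 : Subring (PowerSeries (PowerSeries F)))
    [Countable D0] [IsNoetherianRing D0] [IsLocalRing D0]
    (hdense : ∀ f : PowerSeries (PowerSeries F), ∀ k : ℕ, ∃ d ∈ D0,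
      f - d ∈ (maximalIdeal (PowerSeries (PowerSeries F))) ^ k)
    (hfilt : ∀ k : ℕ,
      Ideal.comap D0.subtype ((maximalIdeal (PowerSeries (PowerSeries F))) ^ k) =
        (maximalIdeal D0) ^ k) :
    ∃ γ : PowerSeries F, PowerSeries.constantCoeff γ = 0 ∧
      Ideal.comap D0.subtype
        (Ideal.span {(PowerSeries.X - PowerSeries.C γ :
          PowerSeries (PowerSeries F))}) = ⊥ := by
  classical
  set Bad : Set (PowerSeries F) :=
    ⋃ d : D0, {γ : PowerSeries F | PowerSeries.constantCoeff γ = 0 ∧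
      (d : PowerSeries (PowerSeries F)) ≠ 0 ∧
      (PowerSeries.X - PowerSeries.C γ) ∣ (d : PowerSeries (PowerSeries F))}
    with hBad_def
  have hBad : Bad.Countable :=
    Set.countable_iUnion fun d => (Stmt6Aux.Zfin (d : PowerSeries (PowerSeries F))).countable
  have hGood := Stmt6Aux.uncount (F := F)
  have hex : ∃ γ, γ ∈ {γ : PowerSeries F | PowerSeries.constantCoeff γ = 0} \ Bad := by
    by_contra h
    push_neg at h
    refine hGood (Set.Countable.mono ?_ hBad)
    intro γ hγ
    by_contra hγB
    exact h γ ⟨hγ, hγB⟩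
  obtain ⟨γ, hγ0, hγB⟩ := hex
  refine ⟨γ, hγ0, ?_⟩
  rw [eq_bot_iff]
  intro x hx
  rw [Ideal.mem_comap, Ideal.mem_span_singleton] at hx
  rw [Ideal.mem_bot]
  by_contra hne
  have hval : (x : PowerSeries (PowerSeries F)) ≠ 0 := fun h => hne (Subtype.ext h)
  exact hγB (Set.mem_iUnion.2 ⟨x, hγ0, hval, hx⟩)
end

section
/- Let F be a countable field. Then the set of principal prime ideals (t − σ)F[[z,t]], as σ ranges over zF[[z]], is an uncountable family of pairwise distinct prime ideals of F[[z,t]], provided F is infinite; more generally, for any field F the set zF[[z]] is uncountable and σ ↦ (t − σ)F[[z,t]] is injective with each (t − σ) prime. -/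
open PowerSeries Finset

namespace Stmt7Aux

variable {F : Type*} [Field F]

lemma coeffA {σ : PowerSeries F} (hσ : constantCoeff (R := F) σ = 0)
    (x : PowerSeries F) {b j : ℕ} (h : b < j) : coeff (R := F) b (x * σ ^ j) = 0 := by
  apply coeff_of_lt_order
  have h1 : (1 : ℕ∞) ≤ σ.order := by
    refine le_order _ _ fun i hi => ?_
    have : i = 0 := by exact_mod_cast Nat.lt_one_iff.mp (by exact_mod_cast hi)
    subst this
    simpa [coeff_zero_eq_constantCoeff] using hσ
  have h2 : ∀ j : ℕ, (j : ℕ∞) ≤ (σ ^ j).order := by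
    intro j
    induction j with
    | zero => simp
    | succ n ih =>
      calc ((n + 1 : ℕ) : ℕ∞) = (n : ℕ∞) + 1 := by push_cast; rfl
        _ ≤ (σ ^ n).order + σ.order := add_le_add ih h1
        _ ≤ ((σ ^ n) * σ).order := le_order_mul _ _
        _ = (σ ^ (n + 1)).order := by rw [pow_succ]
  calc (b : ℕ∞) < (j : ℕ∞) := by exact_mod_cast h
    _ ≤ (σ ^ j).order := h2 j
    _ ≤ x.order + (σ ^ j).order := le_add_self
    _ ≤ (x * σ ^ j).order := le_order_mul _ _

noncomputable def Qaux (σ : PowerSeries F) (g : ℕ → PowerSeries F) : PowerSeries F :=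
  PowerSeries.mk fun m => ∑ j ∈ range (m + 1), coeff (R := F) m (g j * σ ^ j)

lemma coeff_Qaux_mul {σ : PowerSeries F} (hσ : constantCoeff (R := F) σ = 0) (g : ℕ → PowerSeries F)
    (m : ℕ) : coeff (R := F) m (Qaux σ g * σ) = ∑ j ∈ range (m + 1), coeff (R := F) m (g j * σ ^ (j + 1)) := by
  rw [coeff_mul]
  have key : ∀ p ∈ antidiagonal m, coeff (R := F) p.1 (Qaux σ g) * coeff (R := F) p.2 σ =
      ∑ j ∈ range (m + 1), coeff (R := F) p.1 (g j * σ ^ j) * coeff (R := F) p.2 σ := by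
    intro p hp
    rw [Qaux, coeff_mk, ← Finset.sum_mul]
    congr 1
    apply Finset.sum_subset
    · intro j hj
      simp only [mem_range] at hj ⊢
      have := Finset.HasAntidiagonal.antidiagonal.fst_le hp
      omega
    · intro j _ hj
      simp only [mem_range, not_lt] at hj
      rw [coeffA hσ _ (by omega : p.1 < j)]
  rw [Finset.sum_congr rfl key, Finset.sum_comm]
  refine Finset.sum_congr rfl fun j _ => ?_
  rw [pow_succ, ← mul_assoc, coeff_mul]

lemma Qaux_eq {σ : PowerSeries F} (hσ : constantCoeff (R := F) σ = 0) (g : ℕ → PowerSeries F) :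
    Qaux σ g = g 0 + Qaux σ (fun j => g (j + 1)) * σ := by
  refine PowerSeries.ext fun m => ?_
  rw [map_add, coeff_Qaux_mul hσ, Qaux, coeff_mk]
  have h1 : ∑ j ∈ range (m + 1 + 1), coeff (R := F) m (g j * σ ^ j) =
      ∑ j ∈ range (m + 1), coeff (R := F) m (g j * σ ^ j) := by
    rw [Finset.sum_range_succ, coeffA hσ _ (by omega), add_zero]
  rw [← h1, Finset.sum_range_succ']
  simp [add_comm]

lemma division {σ : PowerSeries F} (hσ : constantCoeff (R := F) σ = 0)
    (f : PowerSeries (PowerSeries F)) :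
    ∃ q : PowerSeries (PowerSeries F), ∃ r : PowerSeries F,
      f = q * (X - C (R := PowerSeries F) σ) + C (R := PowerSeries F) r := by
  classical
  refine ⟨PowerSeries.mk fun n => Qaux σ (fun j => coeff (R := PowerSeries F) (j + n + 1) f),
    Qaux σ (fun j => coeff (R := PowerSeries F) j f), ?_⟩
  refine PowerSeries.ext fun n => ?_
  rw [map_add, mul_sub, map_sub, coeff_mul_C, coeff_C]
  rcases n with _ | n
  · rw [if_pos rfl, coeff_zero_mul_X, Qaux_eq hσ (fun j => coeff (R := PowerSeries F) j f)]
    simp only [coeff_mk, Nat.add_zero]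
    ring
  · rw [if_neg (Nat.succ_ne_zero n), coeff_succ_mul_X, add_zero, coeff_mk, coeff_mk,
      Qaux_eq hσ (fun j => coeff (R := PowerSeries F) (j + n + 1) f)]
    have h2 : (fun j => coeff (R := PowerSeries F) (j + 1 + n + 1) f) =
        (fun j => coeff (R := PowerSeries F) (j + (n + 1) + 1) f) := by
      funext j
      exact congrArg (fun k => coeff (R := PowerSeries F) k f) (by omega)
    rw [h2]
    simp only [Nat.zero_add]
    ring

/-- If `C r` lies in the ideal `(X - C σ)`, then `r = 0`. -/
lemma ker_lemma {σ : PowerSeries F} (hσ : constantCoeff (R := F) σ = 0) (r : PowerSeries F)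
    (hr : C (R := PowerSeries F) r ∈ Ideal.span {(X - C (R := PowerSeries F) σ :
      PowerSeries (PowerSeries F))}) : r = 0 := by
  rw [Ideal.mem_span_singleton] at hr
  obtain ⟨g, hg⟩ := hr
  have hcoeff : ∀ n : ℕ, coeff (R := PowerSeries F) n (C (R := PowerSeries F) r) =
      coeff (R := PowerSeries F) n ((X - C (R := PowerSeries F) σ) * g) := fun n => by rw [hg]
  have hrec : ∀ n : ℕ, coeff (R := PowerSeries F) n g = σ * coeff (R := PowerSeries F) (n + 1) g := by
    intro n
    have := hcoeff (n + 1)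
    rw [coeff_C, if_neg (Nat.succ_ne_zero n), sub_mul, map_sub, coeff_succ_X_mul,
      mul_comm (C (R := PowerSeries F) σ) g, coeff_mul_C] at this
    have := this.symm
    rw [sub_eq_zero] at this
    rw [this, mul_comm]
  have hpow : ∀ n : ℕ, coeff (R := PowerSeries F) 0 g = σ ^ n * coeff (R := PowerSeries F) n g := by
    intro n
    induction n with
    | zero => simp
    | succ k ih => rw [ih, hrec k, pow_succ, mul_assoc]
  have hg0 : coeff (R := PowerSeries F) 0 g = 0 := by
    refine PowerSeries.ext fun m => ?_
    rw [hpow (m + 1), mul_comm]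
    rw [coeffA hσ _ (by omega)]
    simp
  have := hcoeff 0
  rw [coeff_C, if_pos rfl, sub_mul, map_sub, coeff_zero_X_mul,
    mul_comm (C (R := PowerSeries F) σ) g, coeff_mul_C, hg0, zero_mul, zero_sub, neg_zero] at this
  exact this

lemma mem_ideal_iff {σ : PowerSeries F}
    {f : PowerSeries (PowerSeries F)} {q : PowerSeries (PowerSeries F)} {r : PowerSeries F}
    (h : f = q * (X - C (R := PowerSeries F) σ) + C (R := PowerSeries F) r) :
    f - C (R := PowerSeries F) r ∈ Ideal.span {(X - C (R := PowerSeries F) σ :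
      PowerSeries (PowerSeries F))} := by
  rw [h, add_sub_cancel_right, Ideal.mem_span_singleton]
  exact Dvd.intro_left q rfl

end Stmt7Aux

open Stmt7Aux in
/-- In `F[[z,t]] = (F[[z]])[[t]]` over a field `F`:  the set `zF[[z]]` of power series with
zero constant term is uncountable, the assignment `σ ↦ (t - σ)F[[z,t]]` is injective on it,
and each ideal `(t - σ)` is prime. -/
theorem stmt7 (F : Type*) [Field F] :
    ¬ Countable {σ : PowerSeries F // PowerSeries.constantCoeff (R := F) σ = 0} ∧
    Function.Injective (fun σ : {σ : PowerSeries F // PowerSeries.constantCoeff (R := F) σ = 0} =>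
      Ideal.span {(PowerSeries.X - PowerSeries.C (R := PowerSeries F) σ.1 :
        PowerSeries (PowerSeries F))}) ∧
    ∀ σ : PowerSeries F, PowerSeries.constantCoeff (R := F) σ = 0 →
      (Ideal.span {(PowerSeries.X - PowerSeries.C (R := PowerSeries F) σ :
        PowerSeries (PowerSeries F))}).IsPrime := by
  classical
  refine ⟨?_, ?_, ?_⟩
  · -- uncountability
    intro hc
    set φ : Set ℕ → {σ : PowerSeries F // PowerSeries.constantCoeff (R := F) σ = 0} :=
      fun S => ⟨PowerSeries.mk fun n => if n ≠ 0 ∧ (n - 1) ∈ S then 1 else 0, by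
        rw [← PowerSeries.coeff_zero_eq_constantCoeff, PowerSeries.coeff_mk]
        simp⟩ with hφ
    have hinj : Function.Injective φ := by
      intro S T h
      ext k
      have h2 := congrArg (fun x => PowerSeries.coeff (R := F) (k + 1) x.1) h
      simp only [hφ, PowerSeries.coeff_mk, Nat.add_sub_cancel, Nat.succ_ne_zero,
        ne_eq, not_false_iff, true_and] at h2
      constructor <;> intro hk
      · by_contra hT
        rw [if_pos hk, if_neg hT] at h2
        exact one_ne_zero h2
      · by_contra hS
        rw [if_neg hS, if_pos hk] at h2
        exact one_ne_zero h2.symm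
    have : Countable (Set ℕ) := hinj.countable
    obtain ⟨f, hf⟩ := exists_injective_nat (Set ℕ)
    exact Function.cantor_injective f hf
  · -- injectivity
    intro a b h
    simp only at h
    have hmem : PowerSeries.C (R := PowerSeries F) (b.1 - a.1) ∈
        Ideal.span {(PowerSeries.X - PowerSeries.C (R := PowerSeries F) a.1 :
          PowerSeries (PowerSeries F))} := by
      have h1 : (PowerSeries.X - PowerSeries.C (R := PowerSeries F) a.1 :
          PowerSeries (PowerSeries F)) ∈
          Ideal.span {(PowerSeries.X - PowerSeries.C (R := PowerSeries F) a.1 :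
          PowerSeries (PowerSeries F))} := Ideal.mem_span_singleton_self _
      have h2 : (PowerSeries.X - PowerSeries.C (R := PowerSeries F) b.1 :
          PowerSeries (PowerSeries F)) ∈
          Ideal.span {(PowerSeries.X - PowerSeries.C (R := PowerSeries F) a.1 :
          PowerSeries (PowerSeries F))} := by
        rw [h]; exact Ideal.mem_span_singleton_self _
      have := Ideal.sub_mem _ h1 h2
      simpa [map_sub, sub_sub_sub_cancel_left] using this
    have := ker_lemma a.2 _ hmem
    have hba : b.1 = a.1 := by rwa [sub_eq_zero] at this
    exact Subtype.ext hba.symm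
  · -- primality
    intro σ hσ
    constructor
    · intro htop
      have h1 : (1 : PowerSeries (PowerSeries F)) ∈
          Ideal.span {(PowerSeries.X - PowerSeries.C (R := PowerSeries F) σ :
            PowerSeries (PowerSeries F))} := htop ▸ Submodule.mem_top
      have : (1 : PowerSeries F) = 0 := ker_lemma hσ 1 (by simpa using h1)
      exact one_ne_zero this
    · intro f g hfg
      obtain ⟨qf, rf, hf⟩ := division hσ f
      obtain ⟨qg, rg, hg⟩ := division hσ g
      set I := Ideal.span {(PowerSeries.X - PowerSeries.C (R := PowerSeries F) σ :
        PowerSeries (PowerSeries F))} with hI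
      have hf' : f - PowerSeries.C (R := PowerSeries F) rf ∈ I := mem_ideal_iff hf
      have hg' : g - PowerSeries.C (R := PowerSeries F) rg ∈ I := mem_ideal_iff hg
      have hsub : f * g - PowerSeries.C (R := PowerSeries F) rf * PowerSeries.C (R := PowerSeries F) rg
          ∈ I := by
        have : f * g - PowerSeries.C (R := PowerSeries F) rf * PowerSeries.C (R := PowerSeries F) rg =
            (f - PowerSeries.C (R := PowerSeries F) rf) * g +
            PowerSeries.C (R := PowerSeries F) rf * (g - PowerSeries.C (R := PowerSeries F) rg) := by
          ring
        rw [this]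
        exact I.add_mem (I.mul_mem_right _ hf') (I.mul_mem_left _ hg')
      have hCrr : PowerSeries.C (R := PowerSeries F) (rf * rg) ∈ I := by
        have := I.sub_mem hfg hsub
        simpa [map_mul] using this
      have hrr : rf * rg = 0 := ker_lemma hσ _ hCrr
      rcases mul_eq_zero.mp hrr with h0 | h0
      · left
        have : f = qf * (PowerSeries.X - PowerSeries.C (R := PowerSeries F) σ) := by
          rw [hf, h0, map_zero, add_zero]
        rw [this, hI, Ideal.mem_span_singleton]
        exact Dvd.intro_left qf rfl
      · right
        have : g = qg * (PowerSeries.X - PowerSeries.C (R := PowerSeries F) σ) := by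
          rw [hg, h0, map_zero, add_zero]
        rw [this, hI, Ideal.mem_span_singleton]
        exact Dvd.intro_left qg rfl
end

section
/- With the same setup: V a DVR with K[z] ⊆ V ⊆ K[[z]] and completion K[[z]], ω_1,...,ω_r ∈ V[[t]] algebraically independent over Q(V)(t), D = Q(V)(t, ω_1,...,ω_r) ∩ V[[t]], and γ ∈ zK[[z]]. If γ, ω_1(γ),...,ω_r(γ) are algebraically independent over Q(V), then (t − γ)K[[z,t]] ∩ D = (0). -/
/-- Substitution `t ↦ γ` in `ω ∈ K[[z]][[t]]`, for `γ ∈ zK[[z]]`: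
`ω(γ) = ∑_j β_j γ^j` where `ω = ∑_j β_j t^j`. -/
noncomputable def psEval {K : Type*} [Field K]
    (ω : PowerSeries (PowerSeries K)) (γ : PowerSeries K) : PowerSeries K :=
  PowerSeries.mk fun n => PowerSeries.coeff (R := K) n
    (∑ j ∈ Finset.range (n + 1), (PowerSeries.coeff (R := PowerSeries K) j ω) * γ ^ j)

namespace PsEvalAux

open PowerSeries

variable {K : Type*} [Field K] {γ : PowerSeries K}

theorem coeff_mul_pow_eq_zero (hγ : constantCoeff (R := K) γ = 0) (c : PowerSeries K) {j n : ℕ} (h : n < j) :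
    coeff (R := K) n (c * γ ^ j) = 0 := by
  have hX : (X : PowerSeries K) ∣ γ := X_dvd_iff.mpr hγ
  have : (X : PowerSeries K) ^ j ∣ c * γ ^ j := Dvd.dvd.mul_left (pow_dvd_pow_of_dvd hX j) c
  exact (X_pow_dvd_iff.mp this) n h

theorem coeff_psEval_congr {p q : PowerSeries (PowerSeries K)} {n : ℕ}
    (h : ∀ j ≤ n, coeff (R := PowerSeries K) j p = coeff (R := PowerSeries K) j q) :
    coeff (R := K) n (psEval p γ) = coeff (R := K) n (psEval q γ) := by
  simp only [psEval, coeff_mk]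
  congr 1
  exact Finset.sum_congr rfl fun j hj => by
    rw [h j (Nat.lt_succ_iff.mp (Finset.mem_range.mp hj))]

theorem psEval_coe (hγ : constantCoeff (R := K) γ = 0) (P : Polynomial (PowerSeries K)) :
    psEval (P : PowerSeries (PowerSeries K)) γ = P.eval γ := by
  ext n
  have hN : P.natDegree < max (n + 1) (P.natDegree + 1) := lt_of_lt_of_le (Nat.lt_succ_self _) (le_max_right _ _)
  rw [Polynomial.eval_eq_sum_range' hN]
  simp only [psEval, coeff_mk, map_sum, Polynomial.coeff_coe]
  refine Finset.sum_subset (Finset.range_subset_range.mpr (le_max_left _ _)) fun j _ hj => ?_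
  exact coeff_mul_pow_eq_zero hγ _ (Nat.lt_of_succ_le (Nat.succ_le_of_lt (by
    simpa using Finset.mem_range.not.mp hj)))

theorem psEval_add (p q : PowerSeries (PowerSeries K)) :
    psEval (p + q) γ = psEval p γ + psEval q γ := by
  ext n
  simp [psEval, add_mul, Finset.sum_add_distrib]

theorem psEval_one : psEval (1 : PowerSeries (PowerSeries K)) γ = 1 := by
  ext n
  simp only [psEval, coeff_mk]
  rw [Finset.sum_eq_single 0]
  · simp
  · intro j hj hj0
    rw [PowerSeries.coeff_one, if_neg hj0, zero_mul]
  · simp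

theorem psEval_mul (hγ : constantCoeff (R := K) γ = 0) (p q : PowerSeries (PowerSeries K)) :
    psEval (p * q) γ = psEval p γ * psEval q γ := by
  ext n
  set m := n + 1 with hm
  have h1 : coeff (R := K) n (psEval (p * q) γ) =
      coeff (R := K) n (psEval ((trunc m p : PowerSeries (PowerSeries K)) *
        (trunc m q : PowerSeries (PowerSeries K))) γ) := by
    refine coeff_psEval_congr fun j hj => ?_
    have := trunc_trunc_mul_trunc (n := m) p q
    have h2 := congrArg (fun r => Polynomial.coeff r j) this
    simp only [coeff_trunc, if_pos (show j < m from Nat.lt_succ_of_le hj)] at h2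
    exact h2.symm
  rw [h1, ← Polynomial.coe_mul, psEval_coe hγ, Polynomial.eval_mul,
    ← psEval_coe hγ (trunc m p), ← psEval_coe hγ (trunc m q)]
  rw [PowerSeries.coeff_mul, PowerSeries.coeff_mul]
  refine Finset.sum_congr rfl fun ab hab => ?_
  obtain ⟨ha, hb⟩ : ab.1 ≤ n ∧ ab.2 ≤ n := by
    have := Finset.HasAntidiagonal.mem_antidiagonal.mp hab
    omega
  congr 1
  · exact coeff_psEval_congr fun j hj =>
      coeff_coe_trunc_of_lt (Nat.lt_succ_of_le (le_trans hj ha))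
  · exact coeff_psEval_congr fun j hj =>
      coeff_coe_trunc_of_lt (Nat.lt_succ_of_le (le_trans hj hb))

noncomputable def psEvalHom (hγ : constantCoeff (R := K) γ = 0) : PowerSeries (PowerSeries K) →+* PowerSeries K where
  toFun := fun p => psEval p γ
  map_one' := psEval_one
  map_mul' := psEval_mul hγ
  map_zero' := by ext n; simp [psEval]
  map_add' := psEval_add

@[simp] theorem psEvalHom_apply (hγ : constantCoeff (R := K) γ = 0) (p : PowerSeries (PowerSeries K)) :
    psEvalHom hγ p = psEval p γ := by simp [psEvalHom]

theorem psEval_C (a : PowerSeries K) : psEval (PowerSeries.C (R := PowerSeries K) a) γ = a := by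
  ext n
  simp only [psEval, coeff_mk]
  rw [Finset.sum_eq_single 0]
  · simp
  · intro j hj hj0
    rw [coeff_C, if_neg hj0, zero_mul]
  · simp

theorem psEval_X (hγ : constantCoeff (R := K) γ = 0) :
    psEval (PowerSeries.X : PowerSeries (PowerSeries K)) γ = γ := by
  ext n
  simp only [psEval, coeff_mk]
  rcases n with _ | k
  · simp [hγ]
  · rw [Finset.sum_eq_single 1]
    · simp
    · intro j hj hj1
      rw [coeff_X, if_neg hj1, zero_mul]
    · intro h
      exact absurd (Finset.mem_range.mpr (by omega)) h

end PsEvalAux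

set_option synthInstance.maxHeartbeats 1000000 in
set_option maxHeartbeats 1000000 in
/-- Proposition 5.3, (ii) ⇒ (i).  `V` is a DVR with `K[z] ⊆ V ⊆ K[[z]]` and completion
`K[[z]]`, `ω_1,...,ω_r ∈ V[[t]] ⊆ K[[z]][[t]]` are algebraically independent over `Q(V)(t)`,
`D = Q(V)(t,ω_1,...,ω_r) ∩ V[[t]]`, and `γ ∈ zK[[z]]`.  If `γ, ω_1(γ),...,ω_r(γ)` are algebraically
independent over `Q(V)` then `(t-γ)K[[z,t]] ∩ D = (0)`.  Fraction fields are
realized as subfields of `FractionRing (K[[z]][[t]])` resp. `FractionRing K[[z]]`. -/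
theorem stmt10 (K : Type*) [Field K] (r : ℕ)
    (V : Subring (PowerSeries K)) [IsDomain V] [IsDiscreteValuationRing V]
    (hpoly : ∀ p : Polynomial K, (p : PowerSeries K) ∈ V)
    (hdense : ∀ f : PowerSeries K, ∀ k : ℕ, ∃ v ∈ V, ∀ j < k,
      PowerSeries.coeff (R := K) j f = PowerSeries.coeff (R := K) j v)
    (ω : Fin r → PowerSeries (PowerSeries K))
    (hωV : ∀ (i : Fin r) (j : ℕ), PowerSeries.coeff (R := PowerSeries K) j (ω i) ∈ V)
    (hωind : AlgebraicIndependent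
      (Subfield.closure
        ((fun v : PowerSeries K =>
            algebraMap (PowerSeries (PowerSeries K))
              (FractionRing (PowerSeries (PowerSeries K)))
              (PowerSeries.C (R := PowerSeries K) v)) '' (V : Set (PowerSeries K)) ∪
          {algebraMap (PowerSeries (PowerSeries K))
            (FractionRing (PowerSeries (PowerSeries K))) PowerSeries.X}))
      (fun i : Fin r => algebraMap (PowerSeries (PowerSeries K))
        (FractionRing (PowerSeries (PowerSeries K))) (ω i)))
    (γ : PowerSeries K) (hγ : PowerSeries.constantCoeff (R := K) γ = 0)
    (hindep :
      AlgebraicIndependent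
      (Subfield.closure
        ((algebraMap (PowerSeries K) (FractionRing (PowerSeries K))) ''
          (V : Set (PowerSeries K))))
      (Fin.cons (algebraMap (PowerSeries K) (FractionRing (PowerSeries K)) γ)
        (fun i : Fin r => algebraMap (PowerSeries K) (FractionRing (PowerSeries K))
          (psEval (ω i) γ)))) :
    ∀ f : PowerSeries (PowerSeries K),
      (∀ j : ℕ, PowerSeries.coeff (R := PowerSeries K) j f ∈ V) →
      algebraMap (PowerSeries (PowerSeries K)) (FractionRing (PowerSeries (PowerSeries K))) f ∈
        Subfield.closure
          ((fun v : PowerSeries K =>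
              algebraMap (PowerSeries (PowerSeries K))
                (FractionRing (PowerSeries (PowerSeries K)))
                (PowerSeries.C (R := PowerSeries K) v)) '' (V : Set (PowerSeries K)) ∪
            {algebraMap (PowerSeries (PowerSeries K))
              (FractionRing (PowerSeries (PowerSeries K))) PowerSeries.X} ∪
            Set.range (fun i : Fin r => algebraMap (PowerSeries (PowerSeries K))
              (FractionRing (PowerSeries (PowerSeries K))) (ω i))) →
      f ∈ Ideal.span {(PowerSeries.X - PowerSeries.C (R := PowerSeries K) γ :
        PowerSeries (PowerSeries K))} →
      f = 0 := by
  classical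
  intro f hfV hfS hfI
  set FA := FractionRing (PowerSeries (PowerSeries K)) with hFA
  set L := FractionRing (PowerSeries K) with hL
  set i : PowerSeries (PowerSeries K) →+* FA :=
    (algebraMap (PowerSeries (PowerSeries K)) FA : _ →+* _) with hi
  set i' : PowerSeries K →+* L := (algebraMap (PowerSeries K) L : _ →+* _) with hi'
  have hiinj : Function.Injective i :=
    IsFractionRing.injective (PowerSeries (PowerSeries K)) FA
  have hi'inj : Function.Injective i' := IsFractionRing.injective (PowerSeries K) L
  set Φ : PowerSeries (PowerSeries K) →+* PowerSeries K := PsEvalAux.psEvalHom hγ with hΦ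
  -- substitution t ↦ γ kills f
  have hΦf : Φ f = 0 := by
    rw [Ideal.mem_span_singleton] at hfI
    obtain ⟨g, rfl⟩ := hfI
    rw [map_mul, map_sub]
    simp only [hΦ, PsEvalAux.psEvalHom_apply, PsEvalAux.psEval_X hγ, PsEvalAux.psEval_C]
    rw [sub_self, zero_mul]
  -- the generating set as an image
  set S₀ : Set (PowerSeries (PowerSeries K)) :=
    (⇑(PowerSeries.C (R := PowerSeries K)) '' (V : Set (PowerSeries K)) ∪ {PowerSeries.X}) ∪
      Set.range ω with hS₀
  have hset :
      ((fun v : PowerSeries K => i (PowerSeries.C (R := PowerSeries K) v)) ''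
          (V : Set (PowerSeries K)) ∪ {i PowerSeries.X} ∪
        Set.range (fun k : Fin r => i (ω k))) = i '' S₀ := by
    rw [hS₀, Set.image_union, Set.image_union, Set.image_singleton, Set.image_image,
      ← Set.range_comp]
    rfl
  rw [hset] at hfS
  rw [Subfield.mem_closure_iff] at hfS
  obtain ⟨y, hy, z, hz, hyz⟩ := hfS
  rw [← RingHom.map_closure] at hy hz
  obtain ⟨P, hP, rfl⟩ := hy
  obtain ⟨Q, hQ, rfl⟩ := hz
  by_cases hQ0 : Q = 0
  · subst hQ0
    rw [map_zero, div_zero] at hyz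
    exact hiinj (by rw [← hyz, map_zero])
  have hzne : i Q ≠ 0 := fun h => hQ0 (hiinj (by rw [h, map_zero]))
  have hPfQ : P = f * Q := by
    apply hiinj
    rw [map_mul, ← hyz, div_mul_cancel₀ _ hzne]
  have hΦP : Φ P = 0 := by rw [hPfQ, map_mul, hΦf, zero_mul]
  -- the evaluation homomorphism from polynomials over V
  set ρA : V →+* PowerSeries (PowerSeries K) :=
    (PowerSeries.C (R := PowerSeries K)).comp V.subtype with hρA
  set G : Fin (r + 1) → PowerSeries (PowerSeries K) := Fin.cons PowerSeries.X ω with hG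
  set evA : MvPolynomial (Fin (r + 1)) V →+* PowerSeries (PowerSeries K) :=
    MvPolynomial.eval₂Hom ρA G with hevA
  have hrange : Subring.closure S₀ ≤ evA.range := by
    rw [Subring.closure_le]
    rintro x ((⟨v, hv, rfl⟩ | rfl) | ⟨k, rfl⟩)
    · exact ⟨MvPolynomial.C ⟨v, hv⟩, by simp [hevA, hρA]⟩
    · exact ⟨MvPolynomial.X 0, by simp [hevA, hG]⟩
    · exact ⟨MvPolynomial.X k.succ, by simp [hevA, hG]⟩
  obtain ⟨q, hq⟩ := hrange hP
  -- evaluation into L at the substituted values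
  set ρL : V →+* L := i'.comp V.subtype with hρL
  set g : Fin (r + 1) → L :=
    Fin.cons (i' γ) (fun k : Fin r => i' (psEval (ω k) γ)) with hg
  have hcomm : ∀ p : MvPolynomial (Fin (r + 1)) V,
      i' (Φ (evA p)) = MvPolynomial.eval₂ ρL g p := by
    intro p
    rw [hevA, MvPolynomial.coe_eval₂Hom, ← RingHom.comp_apply, MvPolynomial.eval₂_comp_left (i'.comp Φ) ρA G p]
    congr 1
    · ext v
      simp [hρA, hρL, hΦ, PsEvalAux.psEval_C]
    · funext k
      refine Fin.cases ?_ ?_ k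
      · simp [hG, hg, hΦ, PsEvalAux.psEval_X hγ]
      · intro j
        simp [hG, hg, hΦ]
  have hevLq : MvPolynomial.eval₂ ρL g q = 0 := by
    rw [← hcomm q, hq, hΦP, map_zero]
  -- transfer to the subfield and use algebraic independence
  set R₀ : Subfield L :=
    Subfield.closure (⇑i' '' (V : Set (PowerSeries K))) with hR₀
  have hχmem : ∀ v : V, ρL v ∈ R₀ :=
    fun v => Subfield.subset_closure ⟨(v : PowerSeries K), v.2, rfl⟩
  set χ : V →+* R₀ := ρL.codRestrict R₀ hχmem with hχ
  have hχinj : Function.Injective χ := by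
    intro v₁ v₂ h
    have h2 : ρL v₁ = ρL v₂ := congrArg Subtype.val h
    exact Subtype.ext (hi'inj h2)
  have hcompose : (algebraMap R₀ L).comp χ = ρL := RingHom.ext fun v => rfl
  have hmap : MvPolynomial.aeval g (MvPolynomial.map χ q) = 0 := by
    rw [MvPolynomial.aeval_def, MvPolynomial.eval₂_map, hcompose]
    exact hevLq
  have hq0 : MvPolynomial.map χ q = 0 := by
    apply hindep
    rw [map_zero]
    exact hmap
  have hq00 : q = 0 := MvPolynomial.map_injective χ hχinj (by rw [hq0, map_zero])
  have hP0 : P = 0 := by rw [← hq, hq00, map_zero]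
  have hfQ0 : f * Q = 0 := by rw [← hPfQ, hP0]
  exact (mul_eq_zero.mp hfQ0).resolve_right hQ0
end

section
/- Let R_1 = K[[x_1,...,x_n]] and R = R_1[[y]] = K[[x_1,...,x_n,y]] over a field K, and let P be a prime ideal of R with P ∩ R_1 = (0). If dim(R/P) ≤ 1, then R/P is a finite R_1-module and dim(R/P) = n — a contradiction when n ≥ 2; consequently, for n ≥ 2, every prime P of R with P ∩ R_1 = (0) satisfies dim(R/P) ≥ 2. -/
open PowerSeries Finset

section Division

variable {R₀ : Type*} [CommRing R₀]

/-- Shift a power series down by `d`. -/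
noncomputable def shiftd (d : ℕ) (h : PowerSeries R₀) : PowerSeries R₀ :=
  PowerSeries.mk fun k => PowerSeries.coeff (d + k) h

/-- Truncation below degree `d`, as a power series. -/
noncomputable def truncd (d : ℕ) (h : PowerSeries R₀) : PowerSeries R₀ :=
  PowerSeries.mk fun k => if k < d then PowerSeries.coeff k h else 0

lemma truncd_add_X_pow_mul_shiftd (d : ℕ) (h : PowerSeries R₀) :
    truncd d h + X ^ d * shiftd d h = h := by
  ext j
  rw [map_add, coeff_X_pow_mul']
  simp only [truncd, shiftd, coeff_mk]
  by_cases hj : j < d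
  · rw [if_pos hj, if_neg (by omega)]; ring
  · rw [if_neg hj, if_pos (by omega)]
    rw [show d + (j - d) = j by omega]; ring

lemma coeff_mem_of_right {J : Ideal R₀} {b : PowerSeries R₀}
    (hb : ∀ j, PowerSeries.coeff j b ∈ J) (a : PowerSeries R₀) (j : ℕ) :
    PowerSeries.coeff j (a * b) ∈ J := by
  rw [PowerSeries.coeff_mul]
  exact Submodule.sum_mem _ fun p _ => J.mul_mem_left _ (hb _)

lemma coeff_mem_mul {I J : Ideal R₀} {a b : PowerSeries R₀}
    (ha : ∀ j, PowerSeries.coeff j a ∈ I) (hb : ∀ j, PowerSeries.coeff j b ∈ J) (j : ℕ) :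
    PowerSeries.coeff j (a * b) ∈ I * J := by
  rw [PowerSeries.coeff_mul]
  exact Submodule.sum_mem _ fun p _ => Ideal.mul_mem_mul (ha _) (hb _)

/-- The iterative remainder sequence for Weierstrass division. -/
noncomputable def wGseq (v p g : PowerSeries R₀) (d : ℕ) : ℕ → PowerSeries R₀
  | 0 => g
  | k + 1 => -(v * shiftd d (wGseq v p g d k)) * p

lemma wGseq_coeff_mem {I : Ideal R₀} {v p g : PowerSeries R₀} {d : ℕ}
    (hp : ∀ j, PowerSeries.coeff j p ∈ I) :
    ∀ k j, PowerSeries.coeff j (wGseq v p g d k) ∈ I ^ k := by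
  intro k
  induction k with
  | zero => intro j; rw [pow_zero, Ideal.one_eq_top]; exact Submodule.mem_top
  | succ k ih =>
      intro j
      rw [pow_succ]
      exact coeff_mem_mul (fun i => by
        rw [show -(v * shiftd d (wGseq v p g d k)) = v * (-(shiftd d (wGseq v p g d k))) by ring]
        exact coeff_mem_of_right (fun j' => by
          simpa [shiftd, coeff_mk] using (I ^ k).neg_mem (ih _)) v i) hp j

lemma wGseq_eq {f v u p g : PowerSeries R₀} {d : ℕ}
    (hf : f = p + X ^ d * u) (huv : u * v = 1) (k : ℕ) :
    wGseq v p g d k =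
      (v * shiftd d (wGseq v p g d k)) * f + truncd d (wGseq v p g d k) +
        wGseq v p g d (k + 1) := by
  have hG := truncd_add_X_pow_mul_shiftd d (wGseq v p g d k)
  rw [show wGseq v p g d (k+1) = -(v * shiftd d (wGseq v p g d k)) * p from rfl, hf]
  linear_combination -(X ^ d * shiftd d (wGseq v p g d k)) * huv - hG

lemma wGseq_partial {f v u p g : PowerSeries R₀} {d : ℕ}
    (hf : f = p + X ^ d * u) (huv : u * v = 1) (N : ℕ) :
    g = (∑ k ∈ range N, v * shiftd d (wGseq v p g d k)) * f +
        (∑ k ∈ range N, truncd d (wGseq v p g d k)) + wGseq v p g d N := by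
  induction N with
  | zero => simp [wGseq]
  | succ N ih =>
      rw [sum_range_succ, sum_range_succ]
      have h := wGseq_eq (v := v) (g := g) hf huv N
      linear_combination ih + h

end Division

section Mv

variable {K : Type*} [Field K] {n : ℕ}

local notation "A" => MvPowerSeries (Fin n) K
local notation "ε₁" => @MvPowerSeries.constantCoeff (Fin n) K _

lemma degree_add_eq (a b : Fin n →₀ ℕ) :
    Finsupp.degree (a + b) = Finsupp.degree a + Finsupp.degree b := by
  simp only [Finsupp.degree_eq_weight_one, map_add]

lemma coeff_eq_zero_of_mem_pow_ker {k : ℕ} {a : A}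
    (ha : a ∈ (RingHom.ker ε₁) ^ k) {s : Fin n →₀ ℕ} (hs : Finsupp.degree s < k) :
    MvPowerSeries.coeff s a = 0 := by
  induction k generalizing a s with
  | zero => omega
  | succ k ih =>
      rw [pow_succ] at ha
      refine Submodule.mul_induction_on ha (fun x hx y hy => ?_) (fun x y hx hy => ?_) s hs
      · intro s hs
        rw [MvPowerSeries.coeff_mul]
        refine Finset.sum_eq_zero fun pq hpq => ?_
        rw [Finset.HasAntidiagonal.mem_antidiagonal] at hpq
        have hdeg : Finsupp.degree pq.1 + Finsupp.degree pq.2 = Finsupp.degree s := by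
          rw [← hpq, degree_add_eq]
        by_cases h1 : Finsupp.degree pq.1 < k
        · rw [ih hx h1, zero_mul]
        · have h2 : Finsupp.degree pq.2 = 0 := by omega
          have : pq.2 = 0 := (Finsupp.degree_eq_zero_iff _).mp h2
          rw [this, MvPowerSeries.coeff_zero_eq_constantCoeff_apply,
            show @MvPowerSeries.constantCoeff (Fin n) K _ y = 0 from hy, mul_zero]
      · intro s hs
        rw [map_add, hx s hs, hy s hs, add_zero]

/-- Coefficient-wise limit of a sequence of power series whose `k`-th term has
coefficients in the `k`-th power of the maximal ideal. -/
noncomputable def wLim (c : ℕ → PowerSeries A) : PowerSeries A :=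
  PowerSeries.mk fun j =>
    ((fun s => ∑ k ∈ range (Finsupp.degree s + 1),
      MvPowerSeries.coeff s (PowerSeries.coeff j (c k))) : A)

lemma coeff_wLim (c : ℕ → PowerSeries A) (j : ℕ) (s : Fin n →₀ ℕ) :
    MvPowerSeries.coeff s (PowerSeries.coeff j (wLim c)) =
      ∑ k ∈ range (Finsupp.degree s + 1),
        MvPowerSeries.coeff s (PowerSeries.coeff j (c k)) := by
  erw [wLim, PowerSeries.coeff_mk]; rfl

lemma coeff_sum_eq_coeff_wLim {c : ℕ → PowerSeries A}
    (H : ∀ k j, PowerSeries.coeff j (c k) ∈ (RingHom.ker ε₁) ^ k)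
    {N : ℕ} {j : ℕ} {s : Fin n →₀ ℕ} (hs : Finsupp.degree s < N) :
    MvPowerSeries.coeff s (PowerSeries.coeff j (∑ k ∈ range N, c k)) =
      MvPowerSeries.coeff s (PowerSeries.coeff j (wLim c)) := by
  rw [coeff_wLim, map_sum, map_sum]
  refine (Finset.sum_subset (Finset.range_subset_range.mpr (by omega)) fun k hk hk' => ?_).symm
  rw [Finset.mem_range] at hk'
  exact coeff_eq_zero_of_mem_pow_ker (H k j) (by omega)

lemma coeff_coeff_mul_eq_zero {a b : PowerSeries A} {j : ℕ} {s : Fin n →₀ ℕ}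
    (h : ∀ i (u : Fin n →₀ ℕ), Finsupp.degree u ≤ Finsupp.degree s →
      MvPowerSeries.coeff u (PowerSeries.coeff i a) = 0) :
    MvPowerSeries.coeff s (PowerSeries.coeff j (a * b)) = 0 := by
  rw [PowerSeries.coeff_mul, map_sum]
  refine Finset.sum_eq_zero fun p _ => ?_
  rw [MvPowerSeries.coeff_mul]
  refine Finset.sum_eq_zero fun q hq => ?_
  rw [Finset.HasAntidiagonal.mem_antidiagonal] at hq
  have : Finsupp.degree q.1 ≤ Finsupp.degree s := by
    have := degree_add_eq q.1 q.2
    rw [hq] at this; omega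
  rw [h p.1 q.1 this, zero_mul]

end Mv

section Main

variable {K : Type*} [Field K] {n : ℕ}

local notation "A" => MvPowerSeries (Fin n) K
local notation "ε₁" => @MvPowerSeries.constantCoeff (Fin n) K _

theorem weierstrass_division (f : PowerSeries A) (d : ℕ)
    (hu : IsUnit (PowerSeries.coeff d f))
    (hlow : ∀ i, i < d → PowerSeries.coeff i f ∈ RingHom.ker ε₁)
    (g : PowerSeries A) :
    ∃ q r : PowerSeries A, g = q * f + r ∧ ∀ j, d ≤ j → PowerSeries.coeff j r = 0 := by
  set u := shiftd d f with hu_def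
  set p := truncd d f with hp_def
  have hcu : PowerSeries.constantCoeff (R := A) u = PowerSeries.coeff d f := by
    rw [← PowerSeries.coeff_zero_eq_constantCoeff_apply]
    simp [hu_def, shiftd]
  set v := PowerSeries.invOfUnit u hu.unit with hv_def
  have huv : u * v = 1 := PowerSeries.mul_invOfUnit u hu.unit (by rw [hcu, IsUnit.unit_spec])
  have hf : f = p + X ^ d * u := (truncd_add_X_pow_mul_shiftd d f).symm
  have hp : ∀ j, PowerSeries.coeff j p ∈ RingHom.ker ε₁ := by
    intro j
    rw [hp_def]
    simp only [truncd, PowerSeries.coeff_mk]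
    split
    · exact hlow _ ‹_›
    · exact Submodule.zero_mem _
  have HG := wGseq_coeff_mem (v := v) (g := g) (d := d) hp
  have Hq : ∀ k j, PowerSeries.coeff j (v * shiftd d (wGseq v p g d k)) ∈
      (RingHom.ker ε₁) ^ k := fun k j =>
    coeff_mem_of_right (fun j' => by simpa [shiftd] using HG k (d + j')) v j
  have Hr : ∀ k j, PowerSeries.coeff j (truncd d (wGseq v p g d k)) ∈
      (RingHom.ker ε₁) ^ k := by
    intro k j
    simp only [truncd, PowerSeries.coeff_mk]
    split
    · exact HG k j
    · exact Submodule.zero_mem _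
  refine ⟨wLim (fun k => v * shiftd d (wGseq v p g d k)),
    wLim (fun k => truncd d (wGseq v p g d k)), ?_, ?_⟩
  · refine PowerSeries.ext fun j => MvPowerSeries.ext fun s => ?_
    set N := Finsupp.degree s + 1 with hN
    have hsN : Finsupp.degree s < N := by omega
    have hT := wGseq_partial (v := v) (g := g) hf huv N
    have hGN : MvPowerSeries.coeff s (PowerSeries.coeff j (wGseq v p g d N)) = 0 :=
      coeff_eq_zero_of_mem_pow_ker (HG N j) hsN
    have hRN : MvPowerSeries.coeff s (PowerSeries.coeff j
          (∑ k ∈ range N, truncd d (wGseq v p g d k))) =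
        MvPowerSeries.coeff s (PowerSeries.coeff j
          (wLim fun k => truncd d (wGseq v p g d k))) :=
      coeff_sum_eq_coeff_wLim Hr hsN
    have hQF : MvPowerSeries.coeff s (PowerSeries.coeff j
          ((wLim fun k => v * shiftd d (wGseq v p g d k)) * f)) =
        MvPowerSeries.coeff s (PowerSeries.coeff j
          ((∑ k ∈ range N, v * shiftd d (wGseq v p g d k)) * f)) := by
      have hsplit : (wLim fun k => v * shiftd d (wGseq v p g d k)) * f =
          ((wLim fun k => v * shiftd d (wGseq v p g d k)) -
            ∑ k ∈ range N, v * shiftd d (wGseq v p g d k)) * f +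
          (∑ k ∈ range N, v * shiftd d (wGseq v p g d k)) * f := by ring
      rw [hsplit, map_add, map_add, coeff_coeff_mul_eq_zero, zero_add]
      intro i t ht
      rw [map_sub, map_sub, coeff_sum_eq_coeff_wLim Hq (by omega), sub_self]
    conv_lhs => rw [hT]
    simp only [map_add]
    rw [hGN, add_zero, hRN, hQF]
  · intro j hj
    refine MvPowerSeries.ext fun s => ?_
    rw [coeff_wLim, map_zero]
    refine Finset.sum_eq_zero fun k _ => ?_
    have : PowerSeries.coeff j (truncd d (wGseq v p g d k)) = 0 := by
      simp [truncd, not_lt.mpr hj]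
    rw [this, map_zero]

end Main

section Aux

variable {K : Type*} [Field K] {n : ℕ}

/-- Auxiliary: ring hom `K[[x_0,...,x_{n-1}]] → K[[t]]` keeping only monomials in `x_0`. -/
noncomputable def auxPi (K : Type*) [Field K] (n : ℕ) [NeZero n] :
    MvPowerSeries (Fin n) K →+* PowerSeries K where
  toFun f := PowerSeries.mk fun k => MvPowerSeries.coeff (Finsupp.single 0 k) f
  map_one' := by
    ext k
    simp [PowerSeries.coeff_mk, MvPowerSeries.coeff_one, PowerSeries.coeff_one,
      Finsupp.single_eq_zero]
  map_mul' f g := by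
    ext k
    rw [PowerSeries.coeff_mk, PowerSeries.coeff_mul, MvPowerSeries.coeff_mul,
      Finsupp.antidiagonal_single, Finset.sum_map]
    simp [PowerSeries.coeff_mk]
  map_zero' := by ext k; simp
  map_add' f g := by ext k; simp

lemma auxPi_apply (f : MvPowerSeries (Fin n) K) [NeZero n] (k : ℕ) :
    PowerSeries.coeff k (auxPi K n f) = MvPowerSeries.coeff (Finsupp.single 0 k) f := by
  simp [auxPi]

lemma two_le_ringKrullDim_of_chain {S : Type*} [CommRing S] (a b c : Ideal S)
    (ha : a.IsPrime) (hb : b.IsPrime) (hc : c.IsPrime) (hab : a < b) (hbc : b < c) :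
    2 ≤ ringKrullDim S := by
  have := Order.LTSeries.length_le_krullDim (α := PrimeSpectrum S)
    ⟨2, ![⟨a, ha⟩, ⟨b, hb⟩, ⟨c, hc⟩], by
      intro i
      fin_cases i
      · exact hab
      · exact hbc⟩
  exact_mod_cast this

end Aux

section Assembly

variable {K : Type*} [Field K] {n : ℕ}

local notation "ε₁" => @MvPowerSeries.constantCoeff (Fin n) K _
local notation "AA" => MvPowerSeries (Fin n) K
local notation "RR" => PowerSeries (MvPowerSeries (Fin n) K)

set_option synthInstance.maxHeartbeats 1000000 in
set_option maxHeartbeats 2000000 in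
theorem module_finite_of_mem_unit_coeff (P : Ideal RR) (f : RR) (hfP : f ∈ P) (d : ℕ)
    (hu : IsUnit (PowerSeries.coeff d f))
    (hlow : ∀ i, i < d → PowerSeries.coeff i f ∈ RingHom.ker ε₁) :
    Module.Finite AA (RR ⧸ P) := by
  classical
  refine ⟨⟨(range d).image fun j => Ideal.Quotient.mk P ((X : RR) ^ j), ?_⟩⟩
  rw [eq_top_iff]
  rintro z -
  obtain ⟨g, rfl⟩ := Ideal.Quotient.mk_surjective z
  obtain ⟨q, r, hg, hr⟩ := weierstrass_division f d hu hlow g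
  have hmk : Ideal.Quotient.mk P g = Ideal.Quotient.mk P r := by
    rw [hg, map_add, map_mul, Ideal.Quotient.eq_zero_iff_mem.mpr hfP, mul_zero, zero_add]
  have hrsum : r = ∑ j ∈ range d, PowerSeries.C (R := AA) (PowerSeries.coeff j r) * X ^ j := by
    refine PowerSeries.ext fun k => ?_
    rw [map_sum]
    simp only [PowerSeries.coeff_C_mul_X_pow]
    rw [Finset.sum_ite_eq (range d) k fun j => PowerSeries.coeff j r]
    by_cases hk : k < d
    · rw [if_pos (Finset.mem_range.mpr hk)]
    · rw [if_neg (by simp [Finset.mem_range]; omega), hr k (by omega)]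
  rw [hmk, hrsum, map_sum]
  refine Submodule.sum_mem _ fun j hj => ?_
  rw [map_mul]
  have : (Ideal.Quotient.mk P) (PowerSeries.C (R := AA) (PowerSeries.coeff j r)) =
      algebraMap AA (RR ⧸ P) (PowerSeries.coeff j r) := rfl
  rw [this, ← Algebra.smul_def]
  exact Submodule.smul_mem _ _ (Submodule.subset_span
    (Finset.mem_coe.mpr (Finset.mem_image_of_mem _ hj)))

end Assembly

set_option maxHeartbeats 1000000 in
set_option synthInstance.maxHeartbeats 1000000 in
/-- For `n ≥ 2`, `R₁ = K[[x_1,...,x_n]]` and `R = R₁[[y]]`, every prime `P` of `R`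
contracting to `(0)` in `R₁` satisfies `dim R/P ≥ 2`. -/
theorem stmt11 (K : Type*) [Field K] (n : ℕ) (hn : 2 ≤ n)
    (P : Ideal (PowerSeries (MvPowerSeries (Fin n) K))) (hP : P.IsPrime)
    (hcon : Ideal.comap (PowerSeries.C : MvPowerSeries (Fin n) K →+* PowerSeries (MvPowerSeries (Fin n) K)) P = ⊥) :
    2 ≤ ringKrullDim (PowerSeries (MvPowerSeries (Fin n) K) ⧸ P) := by
  classical
  haveI : NeZero n := ⟨by omega⟩
  haveI : P.IsPrime := hP
  set A := MvPowerSeries (Fin n) K with hA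
  set R := PowerSeries A with hR
  set ε₁ := @MvPowerSeries.constantCoeff (Fin n) K _ with hε₁
  set ψ := PowerSeries.map ε₁ with hψ
  -- the two distinguished indices
  have h01 : (0 : Fin n) ≠ ⟨1, by omega⟩ := by
    intro h
    have := congrArg Fin.val h
    simp at this
  -- X i ≠ 0 in A
  have hXne : ∀ i : Fin n, (MvPowerSeries.X i : A) ≠ 0 := by
    intro i h
    have := congrArg (MvPowerSeries.coeff (Finsupp.single i 1)) h
    rw [MvPowerSeries.coeff_X, if_pos rfl, map_zero] at this
    exact one_ne_zero this
  have hCX0 : (PowerSeries.C (R := A) (MvPowerSeries.X 0) : R) ∉ P := by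
    intro h
    have : (MvPowerSeries.X 0 : A) ∈ Ideal.comap (PowerSeries.C (R := A)) P := h
    rw [hcon] at this
    exact hXne 0 (Ideal.mem_bot.mp this)
  have hεψ : ∀ x : R, (ε₁ : A →+* K) (PowerSeries.constantCoeff (R := A) x) =
      PowerSeries.constantCoeff (R := K) (ψ x) := by
    intro x
    rw [← PowerSeries.coeff_zero_eq_constantCoeff_apply,
      ← PowerSeries.coeff_zero_eq_constantCoeff_apply, PowerSeries.coeff_map]
  by_cases hcase : P ≤ RingHom.ker ψ
  · -- Case 1 : P is contained in the prime of series with coefficients in the maximal ideal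
    set Q₁ := RingHom.ker ψ with hQ₁
    set ε := (ε₁ : A →+* K).comp (PowerSeries.constantCoeff (R := A)) with hε
    set Q₂ := RingHom.ker ε with hQ₂
    have hQ₁prime : Q₁.IsPrime := RingHom.ker_isPrime ψ
    have hQ₂prime : Q₂.IsPrime := RingHom.ker_isPrime ε
    have hQ₁₂ : Q₁ ≤ Q₂ := by
      intro x hx
      rw [hQ₁, RingHom.mem_ker] at hx
      rw [hQ₂, RingHom.mem_ker, hε, RingHom.comp_apply, hεψ x, hx, map_zero]
    have hPQ₁ : P < Q₁ := by
      refine lt_of_le_of_ne hcase fun h => hCX0 ?_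
      rw [h, hQ₁, RingHom.mem_ker, hψ, PowerSeries.map_C, MvPowerSeries.constantCoeff_X, map_zero]
    have hQ₁₂lt : Q₁ < Q₂ := by
      refine lt_of_le_of_ne hQ₁₂ fun h => ?_
      have hX2 : (X : R) ∈ Q₂ := by
        rw [hQ₂, RingHom.mem_ker, hε, RingHom.comp_apply, PowerSeries.constantCoeff_X, map_zero]
      rw [← h, hQ₁, RingHom.mem_ker, hψ, PowerSeries.map_X] at hX2
      exact PowerSeries.X_ne_zero hX2
    -- push to the quotient
    have hsurj : Function.Surjective (Ideal.Quotient.mk P) := Ideal.Quotient.mk_surjective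
    have hker : RingHom.ker (Ideal.Quotient.mk P) = P := Ideal.mk_ker
    have hcm : ∀ Q : Ideal R, P ≤ Q →
        Ideal.comap (Ideal.Quotient.mk P) (Ideal.map (Ideal.Quotient.mk P) Q) = Q := by
      intro Q hQ
      rw [Ideal.comap_map_of_surjective _ hsurj, ← RingHom.ker_eq_comap_bot, hker,
        sup_eq_left.mpr hQ]
    have hprime1 : (Ideal.map (Ideal.Quotient.mk P) Q₁).IsPrime :=
      Ideal.map_isPrime_of_surjective hsurj (by rw [hker]; exact hPQ₁.le)
    have hprime2 : (Ideal.map (Ideal.Quotient.mk P) Q₂).IsPrime :=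
      Ideal.map_isPrime_of_surjective hsurj (by rw [hker]; exact hPQ₁.le.trans hQ₁₂)
    refine two_le_ringKrullDim_of_chain ⊥ (Ideal.map (Ideal.Quotient.mk P) Q₁)
      (Ideal.map (Ideal.Quotient.mk P) Q₂) Ideal.bot_prime hprime1 hprime2 ?_ ?_
    · refine bot_lt_iff_ne_bot.mpr fun h => ?_
      have := hcm Q₁ hPQ₁.le
      rw [h] at this
      rw [← RingHom.ker_eq_comap_bot, hker] at this
      exact hPQ₁.ne this
    · refine lt_of_le_of_ne (Ideal.map_mono hQ₁₂lt.le) fun h => ?_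
      have h1 := hcm Q₁ hPQ₁.le
      have h2 := hcm Q₂ (hPQ₁.le.trans hQ₁₂)
      rw [h] at h1
      rw [h1] at h2
      exact hQ₁₂lt.ne h2
  · -- Case 2 : P contains a series with a unit coefficient
    obtain ⟨f, hfP, hfQ⟩ := SetLike.not_le_iff_exists.mp hcase
    have hex : ∃ i, (ε₁ : A →+* K) (PowerSeries.coeff i f) ≠ 0 := by
      by_contra h
      push_neg at h
      refine hfQ (RingHom.mem_ker.mpr (PowerSeries.ext fun i => ?_))
      rw [hψ, PowerSeries.coeff_map, h i, map_zero]
    set d := Nat.find hex with hd_def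
    have hd : (ε₁ : A →+* K) (PowerSeries.coeff d f) ≠ 0 := Nat.find_spec hex
    have hlow : ∀ i, i < d → PowerSeries.coeff i f ∈ RingHom.ker ε₁ := fun i hi =>
      RingHom.mem_ker.mpr (by simpa using Nat.find_min hex hi)
    have hu : IsUnit (PowerSeries.coeff d f) :=
      MvPowerSeries.isUnit_iff_constantCoeff.mpr (isUnit_iff_ne_zero.mpr hd)
    haveI hfin : Module.Finite A (R ⧸ P) := module_finite_of_mem_unit_coeff P f hfP d hu hlow
    haveI : Algebra.IsIntegral A (R ⧸ P) := Algebra.IsIntegral.of_finite A (R ⧸ P)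
    have hinj : Function.Injective (algebraMap A (R ⧸ P)) := by
      rw [RingHom.injective_iff_ker_eq_bot]
      have : algebraMap A (R ⧸ P) = (Ideal.Quotient.mk P).comp (PowerSeries.C (R := A)) := rfl
      rw [this, ← RingHom.comap_ker, Ideal.mk_ker, hcon]
    -- a chain of primes 0 < p₁ < m₁ in A
    set p₁ := RingHom.ker (auxPi K n) with hp₁def
    set m₁ := RingHom.ker (ε₁ : A →+* K) with hm₁def
    haveI hp₁prime : p₁.IsPrime := RingHom.ker_isPrime _
    haveI hm₁prime : m₁.IsPrime := RingHom.ker_isPrime _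
    have hp₁m : p₁ ≤ m₁ := by
      intro a ha
      rw [hp₁def, RingHom.mem_ker] at ha
      rw [hm₁def, RingHom.mem_ker]
      have := congrArg (PowerSeries.coeff 0) ha
      rw [auxPi_apply, map_zero, Finsupp.single_zero] at this
      exact this
    have hp₁bot : p₁ ≠ ⊥ := by
      intro h
      have hmem : (MvPowerSeries.X (⟨1, by omega⟩ : Fin n) : A) ∈ p₁ := by
        rw [hp₁def, RingHom.mem_ker]
        refine PowerSeries.ext fun k => ?_
        rw [auxPi_apply, map_zero, MvPowerSeries.coeff_X, if_neg]
        intro hcontra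
        rcases Finsupp.single_eq_single_iff _ _ _ _ |>.mp hcontra with ⟨h1, -⟩ | ⟨-, h2⟩
        · exact h01 h1
        · exact one_ne_zero h2
      rw [h] at hmem
      exact hXne _ (Ideal.mem_bot.mp hmem)
    have hp₁m₁ : p₁ ≠ m₁ := by
      intro h
      have hX0m : (MvPowerSeries.X 0 : A) ∈ m₁ := by
        rw [hm₁def, RingHom.mem_ker, MvPowerSeries.constantCoeff_X]
      rw [← h, hp₁def, RingHom.mem_ker] at hX0m
      have := congrArg (PowerSeries.coeff 1) hX0m
      rw [auxPi_apply, map_zero, MvPowerSeries.coeff_X, if_pos rfl] at this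
      exact one_ne_zero this
    -- going up twice
    obtain ⟨Q₁, -, hQ₁prime, hQ₁comap⟩ :=
      Ideal.exists_ideal_over_prime_of_isIntegral (S := R ⧸ P) p₁ ⊥
        (by rw [← RingHom.ker_eq_comap_bot, (RingHom.injective_iff_ker_eq_bot _).mp hinj]
            exact bot_le)
    obtain ⟨Q₂, hQ₁₂, hQ₂prime, hQ₂comap⟩ :=
      Ideal.exists_ideal_over_prime_of_isIntegral (S := R ⧸ P) m₁ Q₁
        (by rw [hQ₁comap]; exact hp₁m)
    refine two_le_ringKrullDim_of_chain ⊥ Q₁ Q₂ Ideal.bot_prime hQ₁prime hQ₂prime ?_ ?_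
    · refine bot_lt_iff_ne_bot.mpr fun h => hp₁bot ?_
      rw [← hQ₁comap, h, ← RingHom.ker_eq_comap_bot,
        (RingHom.injective_iff_ker_eq_bot _).mp hinj]
    · refine lt_of_le_of_ne hQ₁₂ fun h => hp₁m₁ ?_
      rw [← hQ₁comap, h, hQ₂comap]
end

section
/- Let φ : K[[z_1,...,z_{m-s}, t_{m-s+1},...,t_m]] → K[[z_1,...,z_m]] be the K-algebra homomorphism fixing z_1,...,z_{m-s} and sending t_{m-i+1} to f_i for 1 ≤ i ≤ s, where z_1,...,z_{m-s}, f_1,...,f_s is a regular sequence in K[[z_1,...,z_m]] with each f_i a monic polynomial in z_{m-i+1} over K[[z_1,...,z_{m-i}]] with coefficients in the maximal ideal (apart from the leading one). Then φ is injective and makes K[[z_1,...,z_m]] a finite free module over K[[z_1,...,z_{m-s}, t_{m-s+1},...,t_m]]. -/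
/-- `F` is a monic "distinguished" polynomial of degree `deg` in the variable `z_v` with
coefficients in the power series ring on the variables `z_j`, `j ≤ v`, all of whose
non-leading coefficients lie in the maximal ideal. -/
def IsDistinguishedIn {K : Type*} [Field K] {m : ℕ}
    (F : MvPowerSeries (Fin m) K) (v : Fin m) (deg : ℕ) : Prop :=
  1 ≤ deg ∧
  (∀ d : Fin m →₀ ℕ, MvPowerSeries.coeff d F ≠ 0 → (∀ j ∈ d.support, j ≤ v) ∧ d v ≤ deg) ∧
  MvPowerSeries.coeff (Finsupp.single v deg) F = 1 ∧
  (∀ d : Fin m →₀ ℕ, d v = deg → d ≠ Finsupp.single v deg → MvPowerSeries.coeff d F = 0) ∧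
  (∀ j < deg, MvPowerSeries.coeff (Finsupp.single v j) F = 0)

set_option maxHeartbeats 1000000

namespace Stmt16Aux

open MvPowerSeries Finset

variable {K : Type*} [Field K] {m : ℕ}

/-- weight of an exponent -/
def wgt (cw : Fin m → ℕ) (d : Fin m →₀ ℕ) : ℕ := ∑ j, cw j * d j

/-- total degree of an exponent -/
def dgt (d : Fin m →₀ ℕ) : ℕ := ∑ j, d j

variable {cw : Fin m → ℕ}

lemma wgt_add (a b : Fin m →₀ ℕ) : wgt cw (a + b) = wgt cw a + wgt cw b := by
  simp [wgt, Finsupp.add_apply, Nat.mul_add, Finset.sum_add_distrib]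

lemma dgt_add (a b : Fin m →₀ ℕ) : dgt (a + b) = dgt a + dgt b := by
  simp [dgt, Finsupp.add_apply, Finset.sum_add_distrib]

lemma wgt_zero : wgt cw (0 : Fin m →₀ ℕ) = 0 := by simp [wgt]

lemma dgt_zero : dgt (0 : Fin m →₀ ℕ) = 0 := by simp [dgt]

lemma wgt_single (j : Fin m) (k : ℕ) : wgt cw (Finsupp.single j k) = cw j * k := by
  rw [wgt, Finset.sum_eq_single j]
  · rw [Finsupp.single_eq_same]
  · intro j' _ hj'
    rw [Finsupp.single_eq_of_ne' (Ne.symm hj'), Nat.mul_zero]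
  · exact fun h => absurd (Finset.mem_univ j) h

lemma dgt_single (j : Fin m) (k : ℕ) : dgt (Finsupp.single j k) = k := by
  rw [dgt, Finset.sum_eq_single j]
  · rw [Finsupp.single_eq_same]
  · intro j' _ hj'
    exact Finsupp.single_eq_of_ne' (Ne.symm hj')
  · exact fun h => absurd (Finset.mem_univ j) h

lemma apply_le_dgt (d : Fin m →₀ ℕ) (j : Fin m) : d j ≤ dgt d :=
  Finset.single_le_sum (fun _ _ => Nat.zero_le _) (Finset.mem_univ j)

variable (cw) in
/-- `F` has leading monomial `ℓ` (coefficient 1, all other monomials of strictly bigger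
weight), and all monomials of total degree at least `n`. -/
def Good (F : MvPowerSeries (Fin m) K) (ℓ : Fin m →₀ ℕ) (n : ℕ) : Prop :=
  MvPowerSeries.coeff ℓ F = 1 ∧
  ∀ d, MvPowerSeries.coeff d F ≠ 0 → (d = ℓ ∨ wgt cw ℓ < wgt cw d) ∧ n ≤ dgt d

lemma Good_one : Good cw (1 : MvPowerSeries (Fin m) K) 0 0 := by
  classical
  constructor
  · exact coeff_zero_one
  · intro d hd
    rw [coeff_one] at hd
    refine ⟨Or.inl ?_, Nat.zero_le _⟩
    by_contra h
    exact hd (if_neg h)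

lemma Good_mul {F F' : MvPowerSeries (Fin m) K} {ℓ ℓ' : Fin m →₀ ℕ} {n n' : ℕ}
    (hF : Good cw F ℓ n) (hF' : Good cw F' ℓ' n') : Good cw (F * F') (ℓ + ℓ') (n + n') := by
  classical
  constructor
  · rw [coeff_mul, Finset.sum_eq_single (ℓ, ℓ')]
    · rw [hF.1, hF'.1, one_mul]
    · rintro ⟨p1, p2⟩ hp hne
      rw [Finset.HasAntidiagonal.mem_antidiagonal] at hp
      by_contra hne0
      have h1 := hF.2 p1 (left_ne_zero_of_mul hne0)
      have h2 := hF'.2 p2 (right_ne_zero_of_mul hne0)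
      have hw : wgt cw p1 + wgt cw p2 = wgt cw ℓ + wgt cw ℓ' := by
        rw [← wgt_add, ← wgt_add, hp]
      rcases h1.1 with rfl | hw1
      · rcases h2.1 with rfl | hw2
        · exact hne rfl
        · omega
      · rcases h2.1 with rfl | hw2 <;> omega
    · intro h
      exact absurd (by simp) h
  · intro d hd
    rw [coeff_mul] at hd
    obtain ⟨⟨p1, p2⟩, hp, hne⟩ := Finset.exists_ne_zero_of_sum_ne_zero hd
    rw [Finset.HasAntidiagonal.mem_antidiagonal] at hp
    have h1 := hF.2 p1 (left_ne_zero_of_mul hne)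
    have h2 := hF'.2 p2 (right_ne_zero_of_mul hne)
    have hwd : wgt cw d = wgt cw p1 + wgt cw p2 := by rw [← wgt_add, hp]
    have hdd : dgt d = dgt p1 + dgt p2 := by rw [← dgt_add, hp]
    constructor
    · rcases h1.1 with rfl | hw1
      · rcases h2.1 with rfl | hw2
        · exact Or.inl hp.symm
        · right; rw [wgt_add]; omega
      · rcases h2.1 with rfl | hw2 <;> (right; rw [wgt_add]; omega)
    · omega

lemma Good_pow {F : MvPowerSeries (Fin m) K} {ℓ : Fin m →₀ ℕ} {n : ℕ}
    (hF : Good cw F ℓ n) (k : ℕ) : Good cw (F ^ k) (k • ℓ) (k * n) := by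
  induction k with
  | zero => simpa using Good_one
  | succ k ih =>
    rw [pow_succ, succ_nsmul, Nat.succ_mul]
    exact Good_mul ih hF

lemma Good_prod {ι : Type*} (s : Finset ι) (F : ι → MvPowerSeries (Fin m) K)
    (ℓ : ι → Fin m →₀ ℕ) (n : ι → ℕ) (h : ∀ i ∈ s, Good cw (F i) (ℓ i) (n i)) :
    Good cw (∏ i ∈ s, F i) (∑ i ∈ s, ℓ i) (∑ i ∈ s, n i) := by
  classical
  induction s using Finset.induction_on with
  | empty => simpa using Good_one
  | insert _ _ hni ih =>
    rw [Finset.prod_insert hni, Finset.sum_insert hni, Finset.sum_insert hni]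
    exact Good_mul (h _ (Finset.mem_insert_self _ _))
      (ih fun i hi => h i (Finset.mem_insert_of_mem hi))

lemma Good_X (j : Fin m) : Good cw (X j : MvPowerSeries (Fin m) K) (Finsupp.single j 1) 1 := by
  classical
  constructor
  · rw [coeff_X, if_pos rfl]
  · intro d hd
    rw [coeff_X] at hd
    by_cases h : d = Finsupp.single j 1
    · subst h
      exact ⟨Or.inl rfl, by rw [dgt_single]⟩
    · exact absurd (if_neg h) hd

lemma Good_dist {F : MvPowerSeries (Fin m) K} {v : Fin m} {deg : ℕ}
    (h : IsDistinguishedIn F v deg) (hc : ∀ j < v, cw v * deg < cw j) :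
    Good cw F (Finsupp.single v deg) 1 := by
  obtain ⟨h1, h2, h3, h4, h5⟩ := h
  refine ⟨h3, fun d hd => ?_⟩
  obtain ⟨hsupp, hdeg⟩ := h2 d hd
  by_cases hds : d = Finsupp.single v deg
  · subst hds
    exact ⟨Or.inl rfl, by rw [dgt_single]; omega⟩
  · have hdv : d v < deg := by
      rcases Nat.lt_or_ge (d v) deg with h | h
      · exact h
      · have : d v = deg := le_antisymm hdeg h
        exact absurd (h4 d this hds) hd
    have hex : ∃ j, j ≠ v ∧ d j ≠ 0 := by
      by_contra hcon
      push_neg at hcon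
      have : d = Finsupp.single v (d v) := by
        ext j
        rcases eq_or_ne j v with rfl | hj
        · rw [Finsupp.single_eq_same]
        · rw [Finsupp.single_eq_of_ne' (Ne.symm hj)]
          exact hcon j hj
      rw [this] at hd
      exact hd (h5 (d v) hdv)
    obtain ⟨j, hjv, hj⟩ := hex
    have hjlt : j < v := lt_of_le_of_ne (hsupp j (Finsupp.mem_support_iff.mpr hj)) hjv
    constructor
    · right
      rw [wgt_single]
      have hle : cw j * d j ≤ wgt cw d := by
        refine Finset.single_le_sum (f := fun i => cw i * d i) (fun _ _ => Nat.zero_le _)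
          (Finset.mem_univ j)
      have hcj : cw v * deg < cw j := hc j hjlt
      have : cw j ≤ cw j * d j := Nat.le_mul_of_pos_right _ (Nat.pos_of_ne_zero hj)
      omega
    · have := apply_le_dgt d j
      omega

end Stmt16Aux


namespace Stmt16Aux

variable {X : Type*} {M : Type*} [AddCommGroup M]

/-- `N` is local w.r.t. weight `wt`: `N v x` depends only on values of `v` at lower weight. -/
def IsLocal (wt : X → ℕ) (N : (X → M) → X → M) : Prop :=
  ∀ x (v v' : X → M), (∀ y, wt y < wt x → v y = v' y) → N v x = N v' x

noncomputable def wsolve (wt : X → ℕ) (N : (X → M) → X → M) (u : X → M) : X → M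
  | x => u x - N (fun y => if _ : wt y < wt x then wsolve wt N u y else 0) x
  termination_by x => wt x

theorem wsolve_spec {wt : X → ℕ} {N : (X → M) → X → M} (hN : IsLocal wt N) (u : X → M) :
    ∀ x, wsolve wt N u x + N (wsolve wt N u) x = u x := by
  intro x
  rw [wsolve]
  have h : N (fun y => if _ : wt y < wt x then wsolve wt N u y else 0) x
      = N (wsolve wt N u) x := hN x _ _ (fun y hy => by simp [hy])
  rw [h]; abel

theorem solve_unique {wt : X → ℕ} {N : (X → M) → X → M} (hN : IsLocal wt N) {u v v' : X → M}
    (hv : ∀ x, v x + N v x = u x) (hv' : ∀ x, v' x + N v' x = u x) : v = v' := by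
  have key : ∀ n x, wt x < n → v x = v' x := by
    intro n
    induction n with
    | zero => exact fun x h => absurd h (Nat.not_lt_zero _)
    | succ n ih =>
      intro x hx
      have hNx : N v x = N v' x := hN x v v' (fun y hy => ih y (by omega))
      have h1 := hv x
      have h2 := hv' x
      have : v x = u x - N v x := by rw [← h1]; abel
      rw [this, hNx]
      rw [← h2]; abel
  funext x; exact key (wt x + 1) x (by omega)

theorem wsolve_existsUnique {wt : X → ℕ} {N : (X → M) → X → M} (hN : IsLocal wt N) (u : X → M) :
    ∃! v : X → M, ∀ x, v x + N v x = u x :=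
  ⟨wsolve wt N u, wsolve_spec hN u, fun v hv => solve_unique hN hv (wsolve_spec hN u)⟩

end Stmt16Aux

namespace Stmt16Aux

noncomputable section

open MvPowerSeries Finset

variable {K : Type*} [Field K] {m : ℕ}

/-- exponent of a basis monomial -/
def bexp {D : Fin m → ℕ} (b : (j : Fin m) → Fin (D j)) : Fin m →₀ ℕ :=
  Finsupp.equivFunOnFinite.symm fun j => (b j : ℕ)

lemma bexp_apply {D : Fin m → ℕ} (b : (j : Fin m) → Fin (D j)) (j : Fin m) :
    bexp b j = b j := rfl

/-- the exponent scaling map -/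
def lup (D : Fin m → ℕ) (e : Fin m → ℕ) : Fin m →₀ ℕ :=
  Finsupp.equivFunOnFinite.symm fun j => D j * e j

lemma lup_apply (D : Fin m → ℕ) (e : Fin m → ℕ) (j : Fin m) : lup D e j = D j * e j := rfl

/-- quotient part of an exponent -/
def qd (D : Fin m → ℕ) (d : Fin m →₀ ℕ) : Fin m → ℕ := fun j => d j / D j

/-- remainder part of an exponent -/
def rhod (D : Fin m → ℕ) (hD : ∀ j, 1 ≤ D j) (d : Fin m →₀ ℕ) : (j : Fin m) → Fin (D j) :=
  fun j => ⟨d j % D j, Nat.mod_lt _ (hD j)⟩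

lemma recompose (D : Fin m → ℕ) (hD : ∀ j, 1 ≤ D j) (d : Fin m →₀ ℕ) :
    lup D (qd D d) + bexp (rhod D hD d) = d := by
  ext j
  rw [Finsupp.add_apply, lup_apply, bexp_apply]
  exact Nat.div_add_mod (d j) (D j)

lemma qd_lup (D : Fin m → ℕ) (hD : ∀ j, 1 ≤ D j) (e : Fin m → ℕ)
    (b : (j : Fin m) → Fin (D j)) : qd D (lup D e + bexp b) = e := by
  funext j
  show (lup D e + bexp b) j / D j = e j
  rw [Finsupp.add_apply, lup_apply, bexp_apply]
  rw [Nat.mul_add_div (hD j), Nat.div_eq_of_lt (b j).isLt, Nat.add_zero]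

lemma rhod_lup (D : Fin m → ℕ) (hD : ∀ j, 1 ≤ D j) (e : Fin m → ℕ)
    (b : (j : Fin m) → Fin (D j)) : rhod D hD (lup D e + bexp b) = b := by
  funext j
  apply Fin.ext
  show (lup D e + bexp b) j % D j = b j
  rw [Finsupp.add_apply, lup_apply, bexp_apply]
  rw [Nat.mul_add_mod, Nat.mod_eq_of_lt (b j).isLt]

lemma bexp_rhod_le (D : Fin m → ℕ) (hD : ∀ j, 1 ≤ D j) (d : Fin m →₀ ℕ) :
    bexp (rhod D hD d) ≤ d := by
  rw [Finsupp.le_def]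
  intro j
  exact Nat.mod_le _ _

lemma sub_rhod (D : Fin m → ℕ) (hD : ∀ j, 1 ≤ D j) (d : Fin m →₀ ℕ) :
    d - bexp (rhod D hD d) = lup D (qd D d) := by
  ext j
  rw [Finsupp.tsub_apply, lup_apply, bexp_apply]
  exact Nat.sub_eq_of_eq_add (by rw [qd]; exact (Nat.div_add_mod (d j) (D j)).symm)

/-- the error coefficient kernel -/
def rrK (D : Fin m → ℕ) (g : Fin m → MvPowerSeries (Fin m) K) (e : Fin m → ℕ)
    (d' : Fin m →₀ ℕ) : K :=
  MvPowerSeries.coeff d' (∏ j, g j ^ e j) - (if d' = lup D e then 1 else 0)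

/-- the error operator -/
def Nop (D : Fin m → ℕ) (g : Fin m → MvPowerSeries (Fin m) K)
    (v : (Fin m →₀ ℕ) → K) (d : Fin m →₀ ℕ) : K :=
  ∑ b : (j : Fin m) → Fin (D j), if bexp b ≤ d then
    ∑ e ∈ Fintype.piFinset (fun _ : Fin m => Finset.range (dgt d + 1)),
      v (lup D e + bexp b) * rrK D g e (d - bexp b)
  else 0

/-- coefficient system of a tuple of power series -/
def vmap (D : Fin m → ℕ) (hD : ∀ j, 1 ≤ D j)
    (H : ((j : Fin m) → Fin (D j)) → MvPowerSeries (Fin m) K) (d : Fin m →₀ ℕ) : K :=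
  MvPowerSeries.coeff (Finsupp.equivFunOnFinite.symm (qd D d)) (H (rhod D hD d))

/-- inverse of `vmap` -/
def hinv (D : Fin m → ℕ) (v : (Fin m →₀ ℕ) → K) :
    ((j : Fin m) → Fin (D j)) → MvPowerSeries (Fin m) K :=
  fun b dd => v (lup D (Finsupp.equivFunOnFinite dd) + bexp b)

lemma coeff_hinv (D : Fin m → ℕ) (v : (Fin m →₀ ℕ) → K) (b : (j : Fin m) → Fin (D j))
    (dd : Fin m →₀ ℕ) :
    MvPowerSeries.coeff dd (hinv D v b) = v (lup D (Finsupp.equivFunOnFinite dd) + bexp b) :=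
  rfl

lemma vmap_hinv (D : Fin m → ℕ) (hD : ∀ j, 1 ≤ D j) (v : (Fin m →₀ ℕ) → K) :
    vmap D hD (hinv D v) = v := by
  funext d
  rw [vmap, coeff_hinv, Equiv.apply_symm_apply, recompose]

lemma hinv_vmap (D : Fin m → ℕ) (hD : ∀ j, 1 ≤ D j)
    (H : ((j : Fin m) → Fin (D j)) → MvPowerSeries (Fin m) K) :
    hinv D (vmap D hD H) = H := by
  funext b
  apply MvPowerSeries.ext
  intro dd
  rw [coeff_hinv, vmap, qd_lup D hD _ b, rhod_lup D hD _ b, Equiv.symm_apply_apply]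

lemma goodP {cw D : Fin m → ℕ} {g : Fin m → MvPowerSeries (Fin m) K}
    (hg : ∀ j, Good cw (g j) (Finsupp.single j (D j)) 1) (e : Fin m → ℕ) :
    Good cw (∏ j, g j ^ e j) (lup D e) (∑ j, e j) := by
  have h1 := Good_prod (cw := cw) Finset.univ (fun j => g j ^ e j)
    (fun j => e j • Finsupp.single j (D j)) (fun j => e j * 1)
    (fun j _ => Good_pow (hg j) (e j))
  have h2 : ∑ j, e j • Finsupp.single j (D j) = lup D e := by
    ext j
    rw [Finsupp.finset_sum_apply, lup_apply]
    rw [Finset.sum_eq_single j]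
    · rw [Finsupp.smul_apply, Finsupp.single_eq_same, smul_eq_mul, Nat.mul_comm]
    · intro j' _ hj'
      rw [Finsupp.smul_apply, Finsupp.single_eq_of_ne' hj', smul_zero]
    · exact fun h => absurd (Finset.mem_univ j) h
  have h3 : ∑ j, e j * 1 = ∑ j, e j := by simp
  rw [h2, h3] at h1
  exact h1

lemma rr_wgt {cw D : Fin m → ℕ} {g : Fin m → MvPowerSeries (Fin m) K}
    (hg : ∀ j, Good cw (g j) (Finsupp.single j (D j)) 1) (e : Fin m → ℕ) (d' : Fin m →₀ ℕ)
    (h : rrK D g e d' ≠ 0) : wgt cw (lup D e) < wgt cw d' := by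
  have hP := goodP hg e
  by_cases hc : d' = lup D e
  · exfalso
    apply h
    rw [rrK, if_pos hc, hc, hP.1, sub_self]
  · rw [rrK, if_neg hc, sub_zero] at h
    rcases (hP.2 d' h).1 with h'' | h''
    · exact absurd h'' hc
    · exact h''

lemma Nop_local {cw D : Fin m → ℕ} {g : Fin m → MvPowerSeries (Fin m) K}
    (hg : ∀ j, Good cw (g j) (Finsupp.single j (D j)) 1) :
    IsLocal (wgt cw) (Nop (K := K) D g) := by
  intro d v v' hv
  simp only [Nop]
  refine Finset.sum_congr rfl fun b _ => ?_
  split_ifs with hb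
  · refine Finset.sum_congr rfl fun e _ => ?_
    rcases eq_or_ne (rrK D g e (d - bexp b)) 0 with h0 | h0
    · rw [h0, mul_zero, mul_zero]
    · have h1 := rr_wgt hg e _ h0
      have h3 : (d - bexp b) + bexp b = d := tsub_add_cancel_of_le hb
      have h4 : wgt cw (d - bexp b) + wgt cw (bexp b) = wgt cw d := by rw [← wgt_add, h3]
      have h2 : wgt cw (lup D e + bexp b) < wgt cw d := by rw [wgt_add]; omega
      rw [hv _ h2]
  · rfl

lemma claimA (cw : Fin m → ℕ) (D : Fin m → ℕ) (hD : ∀ j, 1 ≤ D j)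
    (g : Fin m → MvPowerSeries (Fin m) K)
    (hg : ∀ j, Good cw (g j) (Finsupp.single j (D j)) 1)
    (φ : MvPowerSeries (Fin m) K →+* MvPowerSeries (Fin m) K)
    (hφ' : ∀ (F : MvPowerSeries (Fin m) K) (d : Fin m →₀ ℕ),
      MvPowerSeries.coeff d (φ F) =
        ∑ e ∈ Fintype.piFinset (fun _ : Fin m => Finset.range (dgt d + 1)),
          MvPowerSeries.coeff (Finsupp.equivFunOnFinite.symm e) F *
            MvPowerSeries.coeff d (∏ j, g j ^ e j))
    (H : ((j : Fin m) → Fin (D j)) → MvPowerSeries (Fin m) K) (d : Fin m →₀ ℕ) :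
    MvPowerSeries.coeff d (∑ b, φ (H b) * MvPowerSeries.monomial (bexp b) 1)
      = vmap D hD H d + Nop D g (vmap D hD H) d := by
  classical
  have hbox_big : ∀ b : (j : Fin m) → Fin (D j), bexp b ≤ d →
      MvPowerSeries.coeff (d - bexp b) (φ (H b)) =
      ∑ e ∈ Fintype.piFinset (fun _ : Fin m => Finset.range (dgt d + 1)),
        MvPowerSeries.coeff (Finsupp.equivFunOnFinite.symm e) (H b) *
          MvPowerSeries.coeff (d - bexp b) (∏ j, g j ^ e j) := by
    intro b hb
    rw [hφ']
    refine Finset.sum_subset ?_ ?_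
    · intro e he
      rw [Fintype.mem_piFinset] at he ⊢
      intro j
      have hmono : dgt (d - bexp b) ≤ dgt d := by
        refine Finset.sum_le_sum fun j _ => ?_
        rw [Finsupp.tsub_apply]
        omega
      have := he j
      rw [Finset.mem_range] at *
      omega
    · intro e _ hne
      rcases eq_or_ne (MvPowerSeries.coeff (d - bexp b) (∏ j, g j ^ e j)) 0 with h0 | h0
      · rw [h0, mul_zero]
      · exfalso
        apply hne
        rw [Fintype.mem_piFinset]
        intro j
        rw [Finset.mem_range]
        have h1 := ((goodP hg e).2 _ h0).2
        have h2 : e j ≤ ∑ j, e j :=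
          Finset.single_le_sum (fun _ _ => Nat.zero_le _) (Finset.mem_univ j)
        omega
  rw [map_sum]
  have step1 : ∀ b : (j : Fin m) → Fin (D j),
      MvPowerSeries.coeff d (φ (H b) * MvPowerSeries.monomial (bexp b) 1)
      = if bexp b ≤ d then MvPowerSeries.coeff (d - bexp b) (φ (H b)) else 0 := by
    intro b
    rw [coeff_mul_monomial]
    split_ifs <;> simp
  calc
    ∑ b, MvPowerSeries.coeff d (φ (H b) * MvPowerSeries.monomial (bexp b) 1)
      = ∑ b : (j : Fin m) → Fin (D j),
          ((if bexp b ≤ d then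
            ∑ e ∈ Fintype.piFinset (fun _ : Fin m => Finset.range (dgt d + 1)),
              MvPowerSeries.coeff (Finsupp.equivFunOnFinite.symm e) (H b) *
                (if d - bexp b = lup D e then (1 : K) else 0) else 0)
          + (if bexp b ≤ d then
            ∑ e ∈ Fintype.piFinset (fun _ : Fin m => Finset.range (dgt d + 1)),
              MvPowerSeries.coeff (Finsupp.equivFunOnFinite.symm e) (H b) *
                rrK D g e (d - bexp b) else 0)) := by
        refine Finset.sum_congr rfl fun b _ => ?_
        rw [step1]
        split_ifs with hb
        · rw [hbox_big b hb, ← Finset.sum_add_distrib]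
          refine Finset.sum_congr rfl fun e _ => ?_
          rw [← mul_add]
          congr 1
          rw [rrK]
          ring
        · rw [add_zero]
    _ = vmap D hD H d + Nop D g (vmap D hD H) d := by
        rw [Finset.sum_add_distrib]
        congr 1
        · -- the delta part
          have h0 : ∀ b : (j : Fin m) → Fin (D j), b ≠ rhod D hD d →
              (if bexp b ≤ d then
                ∑ e ∈ Fintype.piFinset (fun _ : Fin m => Finset.range (dgt d + 1)),
                  MvPowerSeries.coeff (Finsupp.equivFunOnFinite.symm e) (H b) *
                    (if d - bexp b = lup D e then (1 : K) else 0) else 0) = 0 := by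
            intro b hb
            split_ifs with hble
            · refine Finset.sum_eq_zero fun e _ => ?_
              rw [if_neg, mul_zero]
              intro hcon
              apply hb
              have hdd : d = lup D e + bexp b := by
                rw [← hcon, tsub_add_cancel_of_le hble]
              have h := rhod_lup D hD e b
              rw [← hdd] at h
              exact h.symm
            · rfl
          rw [Finset.sum_eq_single_of_mem _ (Finset.mem_univ (rhod D hD d))
            (fun b _ hb => h0 b hb)]
          rw [if_pos (bexp_rhod_le D hD d)]
          have hqmem : qd D d ∈ Fintype.piFinset (fun _ : Fin m => Finset.range (dgt d + 1)) := by
            rw [Fintype.mem_piFinset]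
            intro j
            rw [Finset.mem_range]
            have h1 : qd D d j ≤ d j := Nat.div_le_self _ _
            have h2 := apply_le_dgt d j
            omega
          rw [Finset.sum_eq_single_of_mem _ hqmem]
          · rw [if_pos (sub_rhod D hD d), mul_one, vmap]
          · intro e _ hne
            rw [if_neg, mul_zero]
            intro hcon
            apply hne
            have hdd : d = lup D e + bexp (rhod D hD d) := by
              rw [← hcon, tsub_add_cancel_of_le (bexp_rhod_le D hD d)]
            have h := qd_lup D hD e (rhod D hD d)
            rw [← hdd] at h
            exact h.symm
        · -- the error part
          rw [Nop]
          refine Finset.sum_congr rfl fun b _ => ?_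
          split_ifs with hb
          · refine Finset.sum_congr rfl fun e _ => ?_
            congr 1
            rw [vmap, qd_lup D hD e b, rhod_lup D hD e b]
          · rfl

theorem main_bijective (cw : Fin m → ℕ) (D : Fin m → ℕ) (hD : ∀ j, 1 ≤ D j)
    (g : Fin m → MvPowerSeries (Fin m) K)
    (hg : ∀ j, Good cw (g j) (Finsupp.single j (D j)) 1)
    (φ : MvPowerSeries (Fin m) K →+* MvPowerSeries (Fin m) K)
    (hφ' : ∀ (F : MvPowerSeries (Fin m) K) (d : Fin m →₀ ℕ),
      MvPowerSeries.coeff d (φ F) =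
        ∑ e ∈ Fintype.piFinset (fun _ : Fin m => Finset.range (dgt d + 1)),
          MvPowerSeries.coeff (Finsupp.equivFunOnFinite.symm e) F *
            MvPowerSeries.coeff d (∏ j, g j ^ e j)) :
    Function.Bijective (fun H : ((j : Fin m) → Fin (D j)) → MvPowerSeries (Fin m) K =>
      ∑ b, φ (H b) * MvPowerSeries.monomial (bexp b) 1) := by
  classical
  have hloc := Nop_local hg
  constructor
  · intro H H' hHH
    simp only at hHH
    have hv : ∀ x, vmap D hD H x + Nop D g (vmap D hD H) x
        = MvPowerSeries.coeff x (∑ b, φ (H b) * MvPowerSeries.monomial (bexp b) 1) :=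
      fun x => (claimA cw D hD g hg φ hφ' H x).symm
    have hv' : ∀ x, vmap D hD H' x + Nop D g (vmap D hD H') x
        = MvPowerSeries.coeff x (∑ b, φ (H b) * MvPowerSeries.monomial (bexp b) 1) := by
      intro x
      rw [hHH]
      exact (claimA cw D hD g hg φ hφ' H' x).symm
    have huniq := solve_unique hloc hv hv'
    calc H = hinv D (vmap D hD H) := (hinv_vmap D hD H).symm
      _ = hinv D (vmap D hD H') := by rw [huniq]
      _ = H' := hinv_vmap D hD H'
  · intro G
    obtain ⟨v, hv, -⟩ := wsolve_existsUnique hloc (fun d => MvPowerSeries.coeff d G)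
    refine ⟨hinv D v, ?_⟩
    apply MvPowerSeries.ext
    intro d
    have := claimA cw D hD g hg φ hφ' (hinv D v) d
    rw [vmap_hinv D hD v] at this
    simp only
    rw [this]
    exact hv d

end

end Stmt16Aux

namespace Stmt16Aux

noncomputable section

open MvPowerSeries Finset

variable {K : Type*} [Field K] {m : ℕ}

lemma hphi_conv {cw D : Fin m → ℕ} {g : Fin m → MvPowerSeries (Fin m) K}
    (hg : ∀ j, Good cw (g j) (Finsupp.single j (D j)) 1)
    (φ : MvPowerSeries (Fin m) K →+* MvPowerSeries (Fin m) K)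
    (hφ : ∀ (F : MvPowerSeries (Fin m) K) (d : Fin m →₀ ℕ),
      MvPowerSeries.coeff d (φ F) =
        ∑ nn ∈ Finset.range ((d.sum fun _ x => x) + 1),
          ∑ e ∈ Finset.Nat.antidiagonalTuple m nn,
            MvPowerSeries.coeff (Finsupp.equivFunOnFinite.symm e) F *
              MvPowerSeries.coeff d (∏ j, g j ^ e j)) :
    ∀ (F : MvPowerSeries (Fin m) K) (d : Fin m →₀ ℕ),
      MvPowerSeries.coeff d (φ F) =
        ∑ e ∈ Fintype.piFinset (fun _ : Fin m => Finset.range (dgt d + 1)),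
          MvPowerSeries.coeff (Finsupp.equivFunOnFinite.symm e) F *
            MvPowerSeries.coeff d (∏ j, g j ^ e j) := by
  classical
  intro F d
  rw [hφ]
  have hsum : (d.sum fun _ x => x) = dgt d := by
    rw [Finsupp.sum_fintype]
    · rfl
    · intro _; rfl
  rw [hsum]
  have hdisj : (↑(Finset.range (dgt d + 1)) : Set ℕ).PairwiseDisjoint
      (Finset.Nat.antidiagonalTuple m) := by
    intro a _ b _ hab
    refine Finset.disjoint_left.mpr fun e hea heb => hab ?_
    rw [Finset.Nat.mem_antidiagonalTuple] at hea heb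
    rw [← hea, ← heb]
  rw [← Finset.sum_biUnion hdisj]
  refine Finset.sum_subset ?_ ?_
  · intro e he
    rw [Finset.mem_biUnion] at he
    obtain ⟨nn, hnn, hemem⟩ := he
    rw [Finset.Nat.mem_antidiagonalTuple] at hemem
    rw [Finset.mem_range] at hnn
    rw [Fintype.mem_piFinset]
    intro j
    rw [Finset.mem_range]
    have h2 : e j ≤ ∑ i, e i :=
      Finset.single_le_sum (fun _ _ => Nat.zero_le _) (Finset.mem_univ j)
    omega
  · intro e _ hne
    rcases eq_or_ne (MvPowerSeries.coeff d (∏ j, g j ^ e j)) 0 with h0 | h0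
    · rw [h0, mul_zero]
    · exfalso
      apply hne
      rw [Finset.mem_biUnion]
      refine ⟨∑ i, e i, ?_, Finset.Nat.mem_antidiagonalTuple.mpr rfl⟩
      rw [Finset.mem_range]
      have h1 := ((goodP hg e).2 _ h0).2
      omega

end

end Stmt16Aux

namespace Stmt16Aux

noncomputable section

open MvPowerSeries Finset

variable {K : Type*} [Field K] {m : ℕ}

/-- Type synonym for the target of `φ`, carrying the module structure along `φ`. -/
def Tgt (_φ : MvPowerSeries (Fin m) K →+* MvPowerSeries (Fin m) K) : Type _ :=
  MvPowerSeries (Fin m) K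

instance tgtAddCommGroup (φ : MvPowerSeries (Fin m) K →+* MvPowerSeries (Fin m) K) :
    AddCommGroup (Tgt φ) :=
  inferInstanceAs (AddCommGroup (MvPowerSeries (Fin m) K))

instance tgtModule (φ : MvPowerSeries (Fin m) K →+* MvPowerSeries (Fin m) K) :
    Module (MvPowerSeries (Fin m) K) (Tgt φ) :=
  (Module.compHom (MvPowerSeries (Fin m) K) φ :
    Module (MvPowerSeries (Fin m) K) (MvPowerSeries (Fin m) K))

/-- The `φ`-semilinear equivalence given by the basis of monomials. -/
def theEquiv (φ : MvPowerSeries (Fin m) K →+* MvPowerSeries (Fin m) K) (D : Fin m → ℕ)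
    (hbij : Function.Bijective
      (fun H : ((j : Fin m) → Fin (D j)) → MvPowerSeries (Fin m) K =>
        ∑ b, φ (H b) * MvPowerSeries.monomial (bexp b) 1)) :
    (((j : Fin m) → Fin (D j)) → MvPowerSeries (Fin m) K)
      ≃ₗ[MvPowerSeries (Fin m) K] Tgt φ :=
  { Equiv.ofBijective _ hbij with
    map_add' := by
      intro H H'
      show (∑ b : (j : Fin m) → Fin (D j),
          φ ((H + H') b) * MvPowerSeries.monomial (bexp b) 1)
        = (∑ b : (j : Fin m) → Fin (D j), φ (H b) * MvPowerSeries.monomial (bexp b) 1)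
          + (∑ b : (j : Fin m) → Fin (D j), φ (H' b) * MvPowerSeries.monomial (bexp b) 1)
      rw [← Finset.sum_add_distrib]
      refine Finset.sum_congr rfl fun b _ => ?_
      rw [Pi.add_apply, map_add]
      exact add_mul (R := MvPowerSeries (Fin m) K) _ _ _
    map_smul' := by
      intro r H
      show (∑ b : (j : Fin m) → Fin (D j),
          φ ((r • H) b) * MvPowerSeries.monomial (bexp b) 1)
        = (φ r * ∑ b : (j : Fin m) → Fin (D j),
            φ (H b) * MvPowerSeries.monomial (bexp b) 1 : MvPowerSeries (Fin m) K)
      rw [Finset.mul_sum]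
      refine Finset.sum_congr rfl fun b _ => ?_
      rw [Pi.smul_apply, smul_eq_mul, map_mul, mul_assoc] }

end

end Stmt16Aux

set_option synthInstance.maxHeartbeats 1000000 in
set_option maxHeartbeats 1000000 in
open Finset in
/-- Let `z_0,...,z_{m-s-1}, f_0,...,f_{s-1}` be a regular sequence in `K[[z_0,...,z_{m-1}]]`
with each `f_i` a monic distinguished polynomial in `z_{m-1-i}` over `K[[z_0,...,z_{m-2-i}]]`.
Then the substitution homomorphism `φ` of `K[[z_0,...,z_{m-1}]]` fixing `z_j` for
`j < m - s` and sending the remaining variables `t_j` (`j ≥ m - s`) to `f_{m-1-j}` (given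
coefficientwise by the usual substitution formula) is injective and module-finite and makes
the target a free module over the source. -/
theorem stmt16 (K : Type*) [Field K] (m s : ℕ) (hs : s ≤ m)
    (f : Fin s → MvPowerSeries (Fin m) K)
    (hf : ∀ i : Fin s, ∃ deg : ℕ,
      IsDistinguishedIn (f i) ⟨m - 1 - (i : ℕ), by have := i.isLt; omega⟩ deg)
    (hreg : RingTheory.Sequence.IsRegular (MvPowerSeries (Fin m) K)
      (List.ofFn (fun j : Fin (m - s) =>
          (MvPowerSeries.X (Fin.castLE (Nat.sub_le m s) j) : MvPowerSeries (Fin m) K)) ++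
        List.ofFn f))
    (φ : MvPowerSeries (Fin m) K →+* MvPowerSeries (Fin m) K)
    (hφ : ∀ (F : MvPowerSeries (Fin m) K) (d : Fin m →₀ ℕ),
      MvPowerSeries.coeff d (φ F) =
        ∑ nn ∈ Finset.range ((d.sum fun _ x => x) + 1),
          ∑ e ∈ Nat.antidiagonalTuple m nn,
            MvPowerSeries.coeff (Finsupp.equivFunOnFinite.symm e) F *
              MvPowerSeries.coeff d
                (∏ j : Fin m,
                  (if h : (j : ℕ) < m - s then (MvPowerSeries.X j : MvPowerSeries (Fin m) K)
                    else f ⟨m - 1 - (j : ℕ), by have := j.isLt; omega⟩) ^ e j)) :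
    Function.Injective φ ∧ φ.Finite ∧
      @Module.Free (MvPowerSeries (Fin m) K) (MvPowerSeries (Fin m) K) _ _
        (Module.compHom _ φ) := by
  classical
  obtain ⟨deg, hdeg⟩ : ∃ deg : Fin s → ℕ, ∀ i : Fin s,
      IsDistinguishedIn (f i) ⟨m - 1 - (i : ℕ), by have := i.isLt; omega⟩ (deg i) :=
    ⟨fun i => (hf i).choose, fun i => (hf i).choose_spec⟩
  set g : Fin m → MvPowerSeries (Fin m) K := fun j =>
    if _ : (j : ℕ) < m - s then (MvPowerSeries.X j : MvPowerSeries (Fin m) K)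
    else f ⟨m - 1 - (j : ℕ), by have := j.isLt; omega⟩ with hgdef
  set D : Fin m → ℕ := fun j =>
    if _ : (j : ℕ) < m - s then 1
    else deg ⟨m - 1 - (j : ℕ), by have := j.isLt; omega⟩ with hDdef
  set Dm : ℕ := Finset.univ.sup D with hDm
  set cw : Fin m → ℕ := fun j => (Dm + 1) ^ (m - (j : ℕ)) with hcw
  have hD : ∀ j, 1 ≤ D j := by
    intro j
    by_cases h : (j : ℕ) < m - s
    · have e2 : D j = 1 := dif_pos h
      omega
    · set i0 : Fin s := ⟨m - 1 - (j : ℕ), by have := j.isLt; omega⟩ with hi0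
      have e2 : D j = deg i0 := dif_neg h
      have h1 : 1 ≤ deg i0 := (hdeg i0).1
      omega
  have hg : ∀ j, Stmt16Aux.Good cw (g j) (Finsupp.single j (D j)) 1 := by
    intro j
    by_cases h : (j : ℕ) < m - s
    · have e1 : g j = MvPowerSeries.X j := dif_pos h
      have e2 : D j = 1 := dif_pos h
      rw [e1, e2]
      exact Stmt16Aux.Good_X j
    · set i0 : Fin s := ⟨m - 1 - (j : ℕ), by have := j.isLt; omega⟩ with hi0
      have e1 : g j = f i0 := dif_neg h
      have e2 : D j = deg i0 := dif_neg h
      rw [e1, e2]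
      have hspec := hdeg i0
      have hvj : (⟨m - 1 - (i0 : ℕ), by have := j.isLt; omega⟩ : Fin m) = j := by
        apply Fin.ext
        show m - 1 - (i0 : ℕ) = (j : ℕ)
        have hval : (i0 : ℕ) = m - 1 - (j : ℕ) := rfl
        have := j.isLt
        omega
      rw [hvj] at hspec
      refine Stmt16Aux.Good_dist hspec ?_
      intro j' hj'
      have h1 : D j ≤ Dm := Finset.le_sup (Finset.mem_univ j)
      rw [← e2]
      have hj'j : (j' : ℕ) < (j : ℕ) := hj'
      have hjm := j.isLt
      have hcwj : cw j = (Dm + 1) ^ (m - (j : ℕ)) := by rw [hcw]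
      have hcwj' : cw j' = (Dm + 1) ^ (m - (j' : ℕ)) := by rw [hcw]
      rw [hcwj, hcwj']
      calc (Dm + 1) ^ (m - (j : ℕ)) * D j
          ≤ (Dm + 1) ^ (m - (j : ℕ)) * Dm := Nat.mul_le_mul_left _ h1
        _ < (Dm + 1) ^ (m - (j : ℕ)) * (Dm + 1) :=
            mul_lt_mul_of_pos_left (Nat.lt_succ_self _) (pow_pos (Nat.succ_pos Dm) _)
        _ = (Dm + 1) ^ (m - (j : ℕ) + 1) := (pow_succ _ _).symm
        _ ≤ (Dm + 1) ^ (m - (j' : ℕ)) :=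
            Nat.pow_le_pow_right (Nat.succ_pos _) (by omega)
  have hφg : ∀ (F : MvPowerSeries (Fin m) K) (d : Fin m →₀ ℕ),
      MvPowerSeries.coeff d (φ F) =
        ∑ nn ∈ Finset.range ((d.sum fun _ x => x) + 1),
          ∑ e ∈ Nat.antidiagonalTuple m nn,
            MvPowerSeries.coeff (Finsupp.equivFunOnFinite.symm e) F *
              MvPowerSeries.coeff d (∏ j, g j ^ e j) := hφ
  have hφ' := Stmt16Aux.hphi_conv hg φ hφg
  have hbij := Stmt16Aux.main_bijective cw D hD g hg φ hφ'
  have hinj : Function.Injective ⇑φ := by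
    rw [injective_iff_map_eq_zero]
    intro F hF
    have hz : (∑ b : (j : Fin m) → Fin (D j),
          φ (Pi.single (M := fun _ : (j : Fin m) → Fin (D j) => MvPowerSeries (Fin m) K)
              (fun j => (⟨0, hD j⟩ : Fin (D j))) F b) *
            MvPowerSeries.monomial (Stmt16Aux.bexp b) 1) =
        (∑ b : (j : Fin m) → Fin (D j),
          φ ((0 : ((j : Fin m) → Fin (D j)) → MvPowerSeries (Fin m) K) b) *
            MvPowerSeries.monomial (Stmt16Aux.bexp b) 1) := by
      refine Finset.sum_congr rfl fun b _ => ?_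
      rcases eq_or_ne b (fun j => (⟨0, hD j⟩ : Fin (D j))) with rfl | hb
      · rw [Pi.single_eq_same, hF, Pi.zero_apply, map_zero]
      · rw [Pi.single_eq_of_ne hb, Pi.zero_apply]
    have hPS := hbij.1 hz
    have hs' := congrFun hPS (fun j => (⟨0, hD j⟩ : Fin (D j)))
    rwa [Pi.single_eq_same, Pi.zero_apply] at hs'
  refine ⟨hinj, ?_, ?_⟩
  · exact @Module.Finite.equiv (MvPowerSeries (Fin m) K)
      (((j : Fin m) → Fin (D j)) → MvPowerSeries (Fin m) K) (Stmt16Aux.Tgt φ)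
      _ _ _ ((Stmt16Aux.tgtAddCommGroup φ).toAddCommMonoid) (Stmt16Aux.tgtModule φ) _
      (Stmt16Aux.theEquiv φ D hbij)
  · exact @Module.Free.of_equiv (MvPowerSeries (Fin m) K) (MvPowerSeries (Fin m) K)
      (((j : Fin m) → Fin (D j)) → MvPowerSeries (Fin m) K) (Stmt16Aux.Tgt φ)
      _ _ _ _ ((Stmt16Aux.tgtAddCommGroup φ).toAddCommMonoid) (Stmt16Aux.tgtModule φ)
      (RingHom.id _) (RingHom.id _) _ _
      (Stmt16Aux.theEquiv φ D hbij) _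
end

section
/- Let K be a field and A = K[x_1,...,x_n]_{(x_1,...,x_n)} the localized polynomial ring with completion = K[[x_1,...,x_n]] , n ≥ 2. Then the generic formal fiber of A is nonzero: there exists a nonzero prime ideal P of K[[x_1,...,x_n]] with P ∩ A = (0). -/
namespace Stmt17Aux

/-- The gap sequence `s k = (k+1)!`. -/
def s (k : ℕ) : ℕ := (k+1).factorial

lemma s_pos (k : ℕ) : 0 < s k := Nat.factorial_pos _

lemma s_succ (k : ℕ) : s (k+1) = (k+2) * s k := Nat.factorial_succ _

lemma lt_s (k : ℕ) : k < s k := lt_of_lt_of_le (Nat.lt_succ_self k) (Nat.self_le_factorial _)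

lemma s_mono : StrictMono s := strictMono_nat_of_lt_succ (fun k => by
  have := s_pos k
  rw [s_succ]; nlinarith)

lemma length_le_sum_map_s (l : List ℕ) : l.length ≤ (l.map s).sum := by
  induction l with
  | nil => simp
  | cons x l ih =>
    simp only [List.map_cons, List.sum_cons, List.length_cons]
    have := s_pos x
    omega

lemma gap (d D k : ℕ) (hk : d + D + 1 ≤ k) (l : List ℕ) (hlen : l.length ≤ d)
    (x y : ℕ) (hx : x ≤ D) (hy : y ≤ D)
    (heq : (l.map s).sum + x = d * s k + y) :
    l.length = d ∧ (∀ t ∈ l, t = k) ∧ x = y := by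
  have hSk : d + D + 2 ≤ s k := le_trans (by omega) (lt_s k)
  -- Step 1: every entry is at most k
  have hle : ∀ t ∈ l, t ≤ k := by
    intro t ht
    by_contra hc
    have h1 : s (k+1) ≤ s t := s_mono.monotone (by omega)
    have h2 : s t ≤ (l.map s).sum :=
      List.single_le_sum (fun _ _ => Nat.zero_le _) _ (List.mem_map_of_mem (f := s) ht)
    have h3 : (d + D + 3) * s k ≤ (k+2) * s k := Nat.mul_le_mul_right _ (by omega)
    have h4 : (d + D + 3) * s k = d * s k + (D+3) * s k := by ring
    have h5 : D + 3 ≤ (D+3) * s k := Nat.le_mul_of_pos_right _ (s_pos k)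
    rw [s_succ] at h1
    linarith
  -- entries bounded: sum ≤ length * s k
  have hsum_le : (l.map s).sum ≤ l.length * s k := by
    have := List.sum_le_card_nsmul (l.map s) (s k)
      (fun t ht => by
        obtain ⟨u, hu, rfl⟩ := List.mem_map.mp ht
        exact s_mono.monotone (hle u hu))
    simpa [smul_eq_mul] using this
  -- Step 2: length = d
  have hlend : l.length = d := by
    by_contra hne
    have h1 : l.length + 1 ≤ d := by omega
    have h2 : l.length * s k ≤ (d-1) * s k := Nat.mul_le_mul_right _ (by omega)
    have h3 : (d-1) * s k + s k = d * s k := by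
      have : (d - 1) + 1 = d := by omega
      calc (d-1) * s k + s k = ((d-1)+1) * s k := by ring
        _ = d * s k := by rw [this]
    linarith
  -- Step 3: every entry equals k
  have hall : ∀ t ∈ l, t = k := by
    intro t ht
    by_contra hne
    have htk : t + 1 ≤ k := by have := hle t ht; omega
    have hd1 : 1 ≤ d := by
      have : 1 ≤ l.length := List.length_pos_iff.mpr (List.ne_nil_of_mem ht)
      omega
    have hperm : l.Perm (t :: l.erase t) := List.perm_cons_erase ht
    have hsum : (l.map s).sum = s t + ((l.erase t).map s).sum := by
      have := (hperm.map s).sum_eq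
      simpa using this
    have herlen : (l.erase t).length = d - 1 := by
      rw [List.length_erase_of_mem ht, hlend]
    have hers : ((l.erase t).map s).sum ≤ (d-1) * s k := by
      have := List.sum_le_card_nsmul ((l.erase t).map s) (s k)
        (fun u hu => by
          obtain ⟨v, hv, rfl⟩ := List.mem_map.mp hu
          exact s_mono.monotone (hle v (List.mem_of_mem_erase hv)))
      simpa [smul_eq_mul, herlen] using this
    have hst : s t ≤ s (k-1) := s_mono.monotone (by omega)
    have hkk : s k = (k+1) * s (k-1) := by
      have h1 : k - 1 + 1 = k := by omega
      have := s_succ (k-1)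
      rw [h1] at this
      rw [this]
      congr 1
      omega
    have hks : k ≤ k * s (k-1) := Nat.le_mul_of_pos_right _ (s_pos _)
    have hexp : (k+1) * s (k-1) = k * s (k-1) + s (k-1) := by ring
    have h3 : (d-1) * s k + s k = d * s k := by
      have h : (d - 1) + 1 = d := by omega
      calc (d-1) * s k + s k = ((d-1)+1) * s k := by ring
        _ = d * s k := by rw [h]
    linarith
  refine ⟨hlend, hall, ?_⟩
  have : l = List.replicate l.length k := List.eq_replicate_of_mem hall
  have hsum : (l.map s).sum = d * s k := by
    rw [this]
    simp [List.map_replicate, List.sum_replicate, hlend, smul_eq_mul]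
  rw [hsum] at heq
  exact Nat.add_left_cancel heq

open MvPowerSeries Finsupp

variable (K : Type*) [Field K] {σ : Type*}

open Classical in
/-- The gap series `G = ∑ X_b ^ (s j)`. -/
noncomputable def G (b : σ) : MvPowerSeries σ K :=
  fun ν => if ∃ j, ν = single b (s j) then (1 : K) else 0

open Classical in
lemma coeff_G (b : σ) (ν : σ →₀ ℕ) :
    MvPowerSeries.coeff ν (G K b) = if ∃ j, ν = single b (s j) then (1 : K) else 0 :=
  rfl

variable {K}

lemma coeff_G_pow_ne_zero {b : σ} {c : ℕ} {ν : σ →₀ ℕ}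
    (h : MvPowerSeries.coeff ν ((G K b) ^ c) ≠ 0) :
    ∃ l : List ℕ, l.length = c ∧ ν = single b ((l.map s).sum) := by
  classical
  induction c generalizing ν with
  | zero =>
    rw [pow_zero, MvPowerSeries.coeff_one] at h
    have hν : ν = 0 := by by_contra hν; simp [hν] at h
    exact ⟨[], rfl, by simp [hν]⟩
  | succ c ih =>
    rw [pow_succ, MvPowerSeries.coeff_mul] at h
    obtain ⟨q, hq, hne⟩ := Finset.exists_ne_zero_of_sum_ne_zero h
    have h1 := left_ne_zero_of_mul hne
    have h2 := right_ne_zero_of_mul hne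
    obtain ⟨l, hl, hv⟩ := ih h1
    obtain ⟨j, hj⟩ : ∃ j, q.2 = single b (s j) := by
      by_contra hc
      rw [coeff_G, if_neg hc] at h2
      exact h2 rfl
    rw [Finset.HasAntidiagonal.mem_antidiagonal] at hq
    refine ⟨l ++ [j], by simp [hl], ?_⟩
    rw [← hq, hv, hj]
    simp [Finsupp.single_add]

lemma coeff_G_pow_diag {b : σ} (d k : ℕ) (hk : d + 1 ≤ k) :
    ∀ c ≤ d, MvPowerSeries.coeff (single b (c * s k)) ((G K b) ^ c) = 1 := by
  classical
  intro c
  induction c with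
  | zero => intro _; simp [MvPowerSeries.coeff_one]
  | succ c ih =>
    intro hc
    rw [pow_succ, MvPowerSeries.coeff_mul]
    rw [Finset.sum_eq_single (single b (c * s k), single b (s k))]
    · rw [ih (by omega), coeff_G, if_pos ⟨k, rfl⟩, one_mul]
    · rintro ⟨u, w⟩ hq hne
      rw [Finset.HasAntidiagonal.mem_antidiagonal] at hq
      by_contra h0
      have h1 := left_ne_zero_of_mul h0
      have h2 := right_ne_zero_of_mul h0
      obtain ⟨l, hl, hu0⟩ := coeff_G_pow_ne_zero h1
      have hu : u = single b ((l.map s).sum) := hu0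
      obtain ⟨j, hj⟩ : ∃ j, w = single b (s j) := by
        by_contra hcc
        rw [coeff_G, if_neg hcc] at h2
        exact h2 rfl
      -- evaluate the antidiagonal equality at b
      have hb : (l.map s).sum + s j = (c+1) * s k := by
        have h5 : u + w = single b ((c+1) * s k) := hq
        rw [hu, hj, ← Finsupp.single_add] at h5
        have := congrArg (fun f : σ →₀ ℕ => f b) h5
        simpa using this
      have hgap := gap (c+1) 0 k (by omega) (l ++ [j]) (by simp [hl]) 0 0 le_rfl le_rfl
        (by simpa [List.sum_append] using hb)
      obtain ⟨hlen, hall, -⟩ := hgap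
      have hjk : j = k := hall j (by simp)
      have hlk : ∀ t ∈ l, t = k := fun t ht => hall t (by simp [ht])
      have hlsum : (l.map s).sum = c * s k := by
        have : l = List.replicate l.length k := List.eq_replicate_of_mem hlk
        rw [this]
        have hlc : l.length = c := by simpa [hl] using hl
        simp [List.map_replicate, List.sum_replicate, hlc, smul_eq_mul]
      exact hne (Prod.ext (by rw [show (u,w).1 = u from rfl, hu, hlsum])
        (by rw [show (u,w).2 = w from rfl, hj, hjk]))
    · intro hmem
      exfalso
      apply hmem
      rw [Finset.HasAntidiagonal.mem_antidiagonal, ← Finsupp.single_add]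
      congr 1
      ring

variable (K) in
/-- The `i`-th slice of a power series along variable `a`. -/
noncomputable def slice (a : σ) (i : ℕ) (q : MvPowerSeries σ K) : MvPowerSeries σ K :=
  fun ν => if ν a = 0 then MvPowerSeries.coeff (ν + single a i) q else 0

lemma coeff_slice (a : σ) (i : ℕ) (q : MvPowerSeries σ K) (ν : σ →₀ ℕ) :
    MvPowerSeries.coeff ν (slice K a i q) =
      if ν a = 0 then MvPowerSeries.coeff (ν + single a i) q else 0 :=
  rfl

lemma slice_sub (a : σ) (i : ℕ) (q r : MvPowerSeries σ K) :
    slice K a i (q - r) = slice K a i q - slice K a i r := by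
  ext ν
  rw [map_sub, coeff_slice, coeff_slice, coeff_slice, map_sub]
  split_ifs <;> simp

lemma slice_zero_eq (a : σ) (q : MvPowerSeries σ K) (hq : q = 0) (i : ℕ) :
    slice K a i q = 0 := by
  ext ν
  rw [coeff_slice, hq]
  split_ifs <;> simp

lemma slice_X_mul_zero (a : σ) (h : MvPowerSeries σ K) :
    slice K a 0 (X a * h) = 0 := by
  classical
  ext ν
  rw [coeff_slice, MvPowerSeries.coeff_zero]
  split_ifs with hν
  · rw [MvPowerSeries.X, Finsupp.single_zero, add_zero, MvPowerSeries.coeff_monomial_mul,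
      if_neg]
    rw [Finsupp.single_le_iff, hν]
    omega
  · rfl

lemma slice_X_mul_succ (a : σ) (i : ℕ) (h : MvPowerSeries σ K) :
    slice K a (i+1) (X a * h) = slice K a i h := by
  classical
  ext ν
  rw [coeff_slice, coeff_slice]
  split_ifs with hν
  · rw [MvPowerSeries.X, MvPowerSeries.coeff_monomial_mul, if_pos, one_mul]
    · congr 1
      have : single a (i+1) = single a i + single a 1 := by
        rw [← Finsupp.single_add]
      rw [this, ← add_assoc, add_tsub_cancel_right]
    · rw [Finsupp.single_le_iff]
      simp only [Finsupp.add_apply, Finsupp.single_eq_same]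
      omega
  · rfl

/-- Slicing along `a` commutes with multiplication by a series supported away from `a`. -/
lemma slice_mul (a : σ) (i : ℕ) (g h : MvPowerSeries σ K)
    (hg : ∀ u : σ →₀ ℕ, MvPowerSeries.coeff u g ≠ 0 → u a = 0) :
    slice K a i (g * h) = g * slice K a i h := by
  classical
  ext ν
  rw [coeff_slice]
  split_ifs with hν
  · rw [MvPowerSeries.coeff_mul, MvPowerSeries.coeff_mul]
    rw [← Finset.sum_filter_of_ne
      (p := fun q : (σ →₀ ℕ) × (σ →₀ ℕ) => q.1 a = 0)
      (f := fun q => MvPowerSeries.coeff q.1 g * MvPowerSeries.coeff q.2 h)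
      (fun q _ hne => hg q.1 (left_ne_zero_of_mul hne))]
    refine (Finset.sum_nbij' (fun q => (q.1, q.2 + single a i))
      (fun q => (q.1, q.2 - single a i)) ?_ ?_ ?_ ?_ ?_).symm
    · rintro ⟨u, w⟩ hq
      rw [Finset.HasAntidiagonal.mem_antidiagonal] at hq
      rw [Finset.mem_filter, Finset.HasAntidiagonal.mem_antidiagonal]
      constructor
      · show u + (w + single a i) = ν + single a i
        rw [← hq]
        exact (add_assoc u w _).symm
      · show u a = 0
        have : u a ≤ ν a := by
          rw [← hq]; simp [Finsupp.add_apply]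
        omega
    · rintro ⟨u, w⟩ hq
      rw [Finset.mem_filter, Finset.HasAntidiagonal.mem_antidiagonal] at hq
      obtain ⟨hq, hua⟩ := hq
      rw [Finset.HasAntidiagonal.mem_antidiagonal]
      have hwa : w a = i := by
        have := congrArg (fun f : σ →₀ ℕ => f a) hq
        simpa [Finsupp.add_apply, Finsupp.single_eq_same, hua, hν] using this
      have hle : single a i ≤ w := by
        rw [Finsupp.single_le_iff, hwa]
      have hw : w - single a i + single a i = w := tsub_add_cancel_of_le hle
      have : u + (w - single a i) + single a i = ν + single a i := by
        rw [add_assoc, hw, hq]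
      exact add_right_cancel this
    · rintro ⟨u, w⟩ hq
      simp only [add_tsub_cancel_right]
    · rintro ⟨u, w⟩ hq
      rw [Finset.mem_filter, Finset.HasAntidiagonal.mem_antidiagonal] at hq
      obtain ⟨hq, hua⟩ := hq
      have hwa : w a = i := by
        have := congrArg (fun f : σ →₀ ℕ => f a) hq
        simpa [Finsupp.add_apply, Finsupp.single_eq_same, hua, hν] using this
      have hle : single a i ≤ w := by
        rw [Finsupp.single_le_iff, hwa]
      simp only [tsub_add_cancel_of_le hle]
    · rintro ⟨u, w⟩ hq
      rw [coeff_slice]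
      rw [Finset.HasAntidiagonal.mem_antidiagonal] at hq
      have hwa : w a = 0 := by
        have : w a ≤ ν a := by rw [← hq]; simp [Finsupp.add_apply]
        omega
      rw [if_pos hwa]
  · symm
    rw [MvPowerSeries.coeff_mul]
    refine Finset.sum_eq_zero ?_
    rintro ⟨u, w⟩ hq
    rw [Finset.HasAntidiagonal.mem_antidiagonal] at hq
    by_cases hu : MvPowerSeries.coeff u g = 0
    · rw [hu, zero_mul]
    · have hua : u a = 0 := hg u hu
      have hwa : w a ≠ 0 := by
        have := congrArg (fun f : σ →₀ ℕ => f a) hq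
        simp only [Finsupp.add_apply, hua, zero_add] at this
        rw [this]; exact hν
      rw [coeff_slice, if_neg hwa, mul_zero]

lemma apply_le_sum (f : σ →₀ ℕ) (a : σ) : f a ≤ f.sum (fun _ n => n) := by
  classical
  by_cases h : a ∈ f.support
  · exact Finset.single_le_sum (fun _ _ => Nat.zero_le _) h
  · rw [Finsupp.notMem_support_iff.mp h]
    exact Nat.zero_le _

lemma sum_single_nat (b : σ) (t : ℕ) : (single b t).sum (fun _ n => n) = t :=
  Finsupp.sum_single_index rfl

lemma sum_add_nat (u w : σ →₀ ℕ) :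
    (u + w).sum (fun _ n => n) = u.sum (fun _ n => n) + w.sum (fun _ n => n) :=
  Finsupp.sum_add_index' (fun _ => rfl) (fun _ _ _ => rfl)

/-- High powers of `G` kill low-degree coefficients. -/
lemma coeff_G_pow_mul_eq_zero {b : σ} (c : ℕ) (y : MvPowerSeries σ K) (m : σ →₀ ℕ)
    (hm : m.sum (fun _ n => n) < c) :
    MvPowerSeries.coeff m ((G K b) ^ c * y) = 0 := by
  classical
  rw [MvPowerSeries.coeff_mul]
  refine Finset.sum_eq_zero ?_
  rintro ⟨u, w⟩ hq
  rw [Finset.HasAntidiagonal.mem_antidiagonal] at hq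
  by_cases hu : MvPowerSeries.coeff u ((G K b) ^ c) = 0
  · rw [show (u, w).1 = u from rfl, hu, zero_mul]
  · exfalso
    obtain ⟨l, hl, hu'⟩ := coeff_G_pow_ne_zero hu
    have h1 : c ≤ (l.map s).sum := hl ▸ length_le_sum_map_s l
    have h2 : u.sum (fun _ n => n) = (l.map s).sum := by
      rw [show u = single b ((l.map s).sum) from hu', sum_single_nat]
    have hq' : u + w = m := hq
    have h3 : u.sum (fun _ n => n) ≤ m.sum (fun _ n => n) := by
      rw [← hq', sum_add_nat]
      omega
    omega

lemma slice_coe_eq_zero (a : σ) (p : MvPolynomial σ K) (i : ℕ)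
    (hi : p.totalDegree < i) :
    slice K a i (p : MvPowerSeries σ K) = 0 := by
  ext ν
  rw [coeff_slice, MvPowerSeries.coeff_zero]
  split_ifs with hν
  · rw [MvPolynomial.coeff_coe]
    by_contra hc
    have hmem : ν + single a i ∈ p.support := MvPolynomial.mem_support_iff.mpr hc
    have h1 : (ν + single a i).sum (fun _ n => n) ≤ p.totalDegree :=
      MvPolynomial.le_totalDegree hmem
    have h2 : i ≤ (ν + single a i) a := by
      simp [Finsupp.add_apply, Finsupp.single_eq_same]
    have h3 := apply_le_sum (ν + single a i) a
    omega
  · rfl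

/-- Telescoping identity. -/
lemma telescope {a b : σ} (hab : a ≠ b) (h : MvPowerSeries σ K) (p : MvPolynomial σ K)
    (hfh : (X a - G K b) * h = (p : MvPowerSeries σ K)) (j : ℕ) :
    (∑ i ∈ Finset.range (j+1), (G K b) ^ i * slice K a i (p : MvPowerSeries σ K))
      + (G K b) ^ (j+1) * slice K a j h = 0 := by
  have hGfree : ∀ u : σ →₀ ℕ, MvPowerSeries.coeff u (G K b) ≠ 0 → u a = 0 := by
    intro u hu
    obtain ⟨jj, hj⟩ : ∃ jj, u = single b (s jj) := by
      by_contra hc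
      rw [coeff_G, if_neg hc] at hu
      exact hu rfl
    rw [hj]
    exact Finsupp.single_eq_of_ne hab
  have hslice : ∀ i, slice K a i (p : MvPowerSeries σ K)
      = slice K a i (X a * h) - G K b * slice K a i h := by
    intro i
    rw [← hfh, sub_mul, slice_sub, slice_mul a i _ h hGfree]
  induction j with
  | zero =>
    rw [Finset.sum_range_one, hslice 0, slice_X_mul_zero, pow_zero, pow_one]
    ring
  | succ j ih =>
    rw [Finset.sum_range_succ, hslice (j+1), slice_X_mul_succ]
    linear_combination ih + (G K b) ^ (j+1) * hslice (j+1)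
      - (G K b) ^ (j+1) * (hslice (j+1))

lemma sum_slices_eq_zero {a b : σ} (hab : a ≠ b) (h : MvPowerSeries σ K)
    (p : MvPolynomial σ K)
    (hfh : (X a - G K b) * h = (p : MvPowerSeries σ K)) :
    ∑ i ∈ Finset.range (p.totalDegree + 1),
      (G K b) ^ i * slice K a i (p : MvPowerSeries σ K) = 0 := by
  ext m
  rw [MvPowerSeries.coeff_zero]
  set N := p.totalDegree with hN
  set M := m.sum (fun _ n => n) with hM
  have htel := telescope hab h p hfh (N + M + 1)
  have hext : ∑ i ∈ Finset.range (N+1), (G K b) ^ i * slice K a i (p : MvPowerSeries σ K)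
      = ∑ i ∈ Finset.range (N+M+2), (G K b) ^ i * slice K a i (p : MvPowerSeries σ K) := by
    refine Finset.sum_subset (Finset.range_subset_range.mpr (by omega)) ?_
    intro i _ hnmem
    rw [Finset.mem_range, not_lt] at hnmem
    rw [slice_coe_eq_zero a p i (by omega), mul_zero]
  have heq : ∑ i ∈ Finset.range (N+1), (G K b) ^ i * slice K a i (p : MvPowerSeries σ K)
      = - ((G K b) ^ (N+M+2) * slice K a (N+M+1) h) := by
    rw [hext]
    exact eq_neg_of_add_eq_zero_left htel
  rw [heq, map_neg, coeff_G_pow_mul_eq_zero _ _ _ (by omega), neg_zero]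

lemma key {a b : σ} (hab : a ≠ b) (h : MvPowerSeries σ K) (p : MvPolynomial σ K)
    (hfh : (X a - G K b) * h = (p : MvPowerSeries σ K)) : p = 0 := by
  classical
  by_contra hp
  have hA := sum_slices_eq_zero hab h p hfh
  set N := p.totalDegree with hN
  obtain ⟨mh, hmh, hmax⟩ := Finset.exists_max_image p.support (fun m => m a)
    (MvPolynomial.support_nonempty.mpr hp)
  set i₀ := mh a with hi0
  set m₀ := mh.erase a with hm0
  have hm₀a : m₀ a = 0 := Finsupp.erase_same
  have hsum_mh : m₀ + single a i₀ = mh := by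
    rw [add_comm, hi0, hm0, Finsupp.single_add_erase]
  have hi₀N : i₀ ≤ N := le_trans (apply_le_sum mh a) (MvPolynomial.le_totalDegree hmh)
  set k := 2*N + 2 with hk
  set μ := m₀ + single b (i₀ * s k) with hμ
  have hsupp_b : ∀ w ∈ p.support, (w : σ →₀ ℕ) b ≤ N := fun w hw =>
    le_trans (apply_le_sum w b) (MvPolynomial.le_totalDegree hw)
  have hm₀b : m₀ b ≤ N := by
    rw [hm0, Finsupp.erase_ne hab.symm]
    exact hsupp_b mh hmh
  -- the key analysis of nonvanishing terms
  have hterm : ∀ (i : ℕ) (u w : σ →₀ ℕ), u + w = μ →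
      MvPowerSeries.coeff u ((G K b) ^ i) ≠ 0 →
      MvPowerSeries.coeff w (slice K a i (p : MvPowerSeries σ K)) ≠ 0 →
      i = i₀ ∧ u = single b (i₀ * s k) ∧ w = m₀ := by
    intro i u w huw hu hw
    obtain ⟨l, hl, hu'⟩ := coeff_G_pow_ne_zero hu
    rw [coeff_slice] at hw
    have hwa : w a = 0 := by
      by_contra hc
      rw [if_neg hc] at hw
      exact hw rfl
    rw [if_pos hwa, MvPolynomial.coeff_coe] at hw
    have hwmem : w + single a i ∈ p.support := MvPolynomial.mem_support_iff.mpr hw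
    have hii₀ : i ≤ i₀ := by
      have := hmax _ hwmem
      simpa [Finsupp.add_apply, Finsupp.single_eq_same, hwa] using this
    have hwb : w b ≤ N := by
      have := hsupp_b _ hwmem
      rwa [Finsupp.add_apply, Finsupp.single_eq_of_ne hab.symm, add_zero] at this
    have hb : (l.map s).sum + w b = i₀ * s k + m₀ b := by
      have := congrArg (fun f : σ →₀ ℕ => f b) huw
      simp only [Finsupp.add_apply, hμ] at this
      rw [hu'] at this
      rw [add_comm (i₀ * s k) (m₀ b)]
      simpa [Finsupp.single_eq_same] using this
    obtain ⟨hlen, hall, -⟩ := gap i₀ N k (by omega) l (by omega) (w b) (m₀ b) hwb hm₀b hb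
    have hieq : i = i₀ := by omega
    have hlsum : (l.map s).sum = i₀ * s k := by
      have hrep : l = List.replicate l.length k := List.eq_replicate_of_mem hall
      rw [hrep]
      simp [List.map_replicate, List.sum_replicate, hlen, smul_eq_mul]
    refine ⟨hieq, by rw [hu', hlsum], ?_⟩
    ext c
    have hc := congrArg (fun f : σ →₀ ℕ => f c) huw
    simp only [Finsupp.add_apply, hμ] at hc
    rw [hu', hlsum] at hc
    by_cases hcb : c = b
    · subst hcb
      simp only [Finsupp.single_eq_same] at hc
      omega
    · simpa [Finsupp.single_eq_of_ne hcb] using hc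
  have h0 : MvPowerSeries.coeff μ (∑ i ∈ Finset.range (N+1),
      (G K b) ^ i * slice K a i (p : MvPowerSeries σ K)) = 0 := by
    rw [hA, MvPowerSeries.coeff_zero]
  rw [map_sum, Finset.sum_eq_single i₀] at h0
  · -- evaluate the main term
    rw [MvPowerSeries.coeff_mul,
      Finset.sum_eq_single (single b (i₀ * s k), m₀)] at h0
    · rw [show ((single b (i₀ * s k), m₀) : (σ →₀ ℕ) × (σ →₀ ℕ)).1 = single b (i₀ * s k)
          from rfl,
        show ((single b (i₀ * s k), m₀) : (σ →₀ ℕ) × (σ →₀ ℕ)).2 = m₀ from rfl,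
        coeff_G_pow_diag i₀ k (by omega) i₀ le_rfl, one_mul, coeff_slice,
        if_pos hm₀a, hsum_mh, MvPolynomial.coeff_coe] at h0
      exact (MvPolynomial.mem_support_iff.mp hmh) h0
    · rintro ⟨u, w⟩ hq hne
      rw [Finset.HasAntidiagonal.mem_antidiagonal] at hq
      by_contra hc
      obtain ⟨-, hu, hw⟩ := hterm i₀ u w hq (left_ne_zero_of_mul hc)
        (right_ne_zero_of_mul hc)
      exact hne (Prod.ext hu hw)
    · intro hmem
      exfalso
      apply hmem
      rw [Finset.HasAntidiagonal.mem_antidiagonal]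
      exact add_comm _ _
  · intro i _ hne
    rw [MvPowerSeries.coeff_mul]
    refine Finset.sum_eq_zero ?_
    rintro ⟨u, w⟩ hq
    rw [Finset.HasAntidiagonal.mem_antidiagonal] at hq
    by_contra hc
    obtain ⟨hi, -, -⟩ := hterm i u w hq (left_ne_zero_of_mul hc)
      (right_ne_zero_of_mul hc)
    exact hne hi
  · intro hmem
    exfalso
    exact hmem (Finset.mem_range.mpr (by omega))

end Stmt17Aux

open Stmt17Aux Finsupp

/-- For `n ≥ 2`, the generic formal fiber of the localized polynomial ring
`A = K[x_1,...,x_n]_{(x_1,...,x_n)}` is nonzero: there is a nonzero prime `P` of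
`K[[x_1,...,x_n]]` with `P ∩ A = (0)`.  Here `A` is realized inside `K[[x_1,...,x_n]]` as the
set of series of the form `p/q` with `p, q` polynomials and `q(0) ≠ 0`. -/
theorem stmt17 (K : Type*) [Field K] (n : ℕ) (hn : 2 ≤ n) :
    ∃ P : Ideal (MvPowerSeries (Fin n) K), P ≠ ⊥ ∧ P.IsPrime ∧
      ∀ f ∈ P, (∃ p q : MvPolynomial (Fin n) K,
        MvPolynomial.coeff 0 q ≠ 0 ∧
          f * (q : MvPowerSeries (Fin n) K) = (p : MvPowerSeries (Fin n) K)) → f = 0 := by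
  classical
  obtain ⟨m, rfl⟩ : ∃ m, n = m + 2 := ⟨n - 2, by omega⟩
  set σ := Fin (m + 2)
  have hab : (0 : σ) ≠ 1 := by
    intro hc
    have := congrArg Fin.val hc
    simp at this
  set f : MvPowerSeries σ K := MvPowerSeries.X 0 - G K 1 with hf
  have hf0 : f ≠ 0 := by
    intro hc
    have h1 : MvPowerSeries.coeff (single (0:σ) 1) f = 1 := by
      rw [hf, map_sub, MvPowerSeries.coeff_index_single_self_X, coeff_G, if_neg, sub_zero]
      rintro ⟨j, hj⟩
      have := congrArg (fun g : σ →₀ ℕ => g 0) hj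
      simp only [Finsupp.single_eq_same, Finsupp.single_eq_of_ne hab] at this
      exact one_ne_zero this
    rw [hc, map_zero] at h1
    exact zero_ne_one h1
  -- the multiplicative set of nonzero "rational" series
  set S : Submonoid (MvPowerSeries σ K) :=
    { carrier := {x | ∃ p q : MvPolynomial σ K,
        MvPolynomial.coeff 0 q ≠ 0 ∧ p ≠ 0 ∧ x * (q : MvPowerSeries σ K) = (p : MvPowerSeries σ K)},
      mul_mem' := by
        rintro x y ⟨p₁, q₁, hq₁, hp₁, he₁⟩ ⟨p₂, q₂, hq₂, hp₂, he₂⟩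
        refine ⟨p₁ * p₂, q₁ * q₂, ?_, mul_ne_zero hp₁ hp₂, ?_⟩
        · rw [← MvPolynomial.constantCoeff_eq] at hq₁ hq₂ ⊢
          rw [map_mul]
          exact mul_ne_zero hq₁ hq₂
        · push_cast
          calc x * y * ((q₁ : MvPowerSeries σ K) * q₂)
              = (x * q₁) * (y * q₂) := by ring
            _ = (p₁ : MvPowerSeries σ K) * p₂ := by rw [he₁, he₂]
      one_mem' := ⟨1, 1, by simp, one_ne_zero, by simp⟩ } with hS
  have hdisj : Disjoint ((Ideal.span {f} : Ideal (MvPowerSeries σ K)) : Set (MvPowerSeries σ K))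
      (S : Set (MvPowerSeries σ K)) := by
    rw [Set.disjoint_left]
    intro x hx hxS
    obtain ⟨c, hc⟩ := Ideal.mem_span_singleton'.mp hx
    obtain ⟨p, q, hq, hp, he⟩ := hxS
    apply hp
    refine key hab (c * (q : MvPowerSeries σ K)) p ?_
    rw [← hf]
    calc f * (c * (q : MvPowerSeries σ K)) = (c * f) * q := by ring
      _ = (p : MvPowerSeries σ K) := by rw [hc, he]
  obtain ⟨P, hPprime, hle, hPdisj⟩ := Ideal.exists_le_prime_disjoint _ S hdisj
  refine ⟨P, ?_, hPprime, ?_⟩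
  · intro hbot
    have : f ∈ P := hle (Ideal.subset_span rfl)
    rw [hbot, Ideal.mem_bot] at this
    exact hf0 this
  · rintro x hx ⟨p, q, hq, he⟩
    by_contra hx0
    have hp : p ≠ 0 := by
      intro hc
      rw [hc, MvPolynomial.coe_zero] at he
      have hq0 : (q : MvPowerSeries σ K) ≠ 0 := by
        intro hc'
        apply hq
        rw [← MvPolynomial.coeff_coe, hc', map_zero]
      exact mul_ne_zero hx0 hq0 he
    exact Set.disjoint_left.mp hPdisj hx ⟨p, q, hq, hp, he⟩
end
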